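/- arXiv:2311.12599 — 15 statements merged into one kernel-verified Lean document; each statement's English description precedes it below -/
import Mathlib

section
/- Let S be a weak contact semilattice satisfying (D1). Then S can be embedded into (the join-semilattice reduct of) a Boolean algebra equipped with a weak contact relation; that is, there exist a Boolean algebra B, a weak contact relation δ_B on B, and an injective map h : S → B with h(0) = 0, h(a + b) = h(a) ⊔ h(b) for all a, b ∈ S, and a δ_S b if and only if h(a) δ_B h(b) for all a, b ∈ S. -/
/-- A weak contact relation on a poset with least element `⊥`. -/
def IsWeakContact {S : Type*} [PartialOrder S] [OrderBot S] (δ : S → S → Prop) : Prop :=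
  (∀ a b : S, δ a b → a ≠ ⊥ ∧ b ≠ ⊥) ∧
  (∀ a : S, a ≠ ⊥ → δ a a) ∧
  (∀ a b : S, δ a b → δ b a) ∧
  (∀ a b a₁ b₁ : S, δ a b → a ≤ a₁ → b ≤ b₁ → δ a₁ b₁)

/-- Condition (D1). -/
def CondD1 {S : Type*} [SemilatticeSup S] [OrderBot S] (δ : S → S → Prop) : Prop :=
  ∀ a b c₀ c₁ : S, ¬ δ c₀ c₁ → b ≤ a ⊔ c₀ → b ≤ a ⊔ c₁ → b ≤ a

section Aux

variable {S : Type} [SemilatticeSup S] [OrderBot S] (δS : S → S → Prop)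

/-- An ideal: contains `⊥`, downward closed, join closed. -/
def WCIdl (I : Set S) : Prop :=
  ⊥ ∈ I ∧ (∀ x y : S, x ≤ y → y ∈ I → x ∈ I) ∧ (∀ x y : S, x ∈ I → y ∈ I → x ⊔ y ∈ I)

/-- A "point": ideal whose complement is a δ-clique. -/
def WCPt (I : Set S) : Prop :=
  WCIdl I ∧ ∀ x y : S, x ∉ I → y ∉ I → δS x y

/-- Key extension lemma using Zorn and (D1). -/
theorem wc_exists_pt (hD1 : CondD1 δS) {a c : S} (hac : ¬ a ≤ c) :
    ∃ I : Set S, WCPt δS I ∧ c ∈ I ∧ a ∉ I := by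
  set 𝒮 : Set (Set S) := {I | WCIdl (S := S) I ∧ c ∈ I ∧ a ∉ I} with h𝒮
  have hbase : {x : S | x ≤ c} ∈ 𝒮 := by
    refine ⟨⟨bot_le, fun x y hxy hy => le_trans hxy hy,
      fun x y hx hy => sup_le hx hy⟩, le_refl c, hac⟩
  have hchaincond : ∀ ch ⊆ 𝒮, IsChain (· ⊆ ·) ch → ch.Nonempty →
      ∃ ub ∈ 𝒮, ∀ s ∈ ch, s ⊆ ub := by
    intro ch hch hchain hne
    obtain ⟨I₀, hI₀⟩ := hne
    refine ⟨⋃₀ ch, ⟨⟨⟨I₀, hI₀, (hch hI₀).1.1⟩, ?_, ?_⟩, ⟨I₀, hI₀, (hch hI₀).2.1⟩, ?_⟩,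
      fun s hs => Set.subset_sUnion_of_mem hs⟩
    · rintro x y hxy ⟨I, hI, hyI⟩
      exact ⟨I, hI, (hch hI).1.2.1 x y hxy hyI⟩
    · rintro x y ⟨I, hI, hxI⟩ ⟨J, hJ, hyJ⟩
      rcases hchain.total hI hJ with hIJ | hJI
      · exact ⟨J, hJ, (hch hJ).1.2.2 x y (hIJ hxI) hyJ⟩
      · exact ⟨I, hI, (hch hI).1.2.2 x y hxI (hJI hyJ)⟩
    · rintro ⟨I, hI, haI⟩
      exact (hch hI).2.2 haI
  obtain ⟨m, hsub, hm⟩ := zorn_subset_nonempty 𝒮 hchaincond _ hbase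
  have hmI : WCIdl (S := S) m := hm.1.1
  have hcm : c ∈ m := hm.1.2.1
  have ham : a ∉ m := hm.1.2.2
  refine ⟨m, ⟨hmI, ?_⟩, hcm, ham⟩
  intro x y hxm hym
  by_contra hnd
  -- the ideal generated by m and z
  have key : ∀ z : S, z ∉ m → ∃ i ∈ m, a ≤ i ⊔ z := by
    intro z hzm
    set J : Set S := {w | ∃ i ∈ m, w ≤ i ⊔ z} with hJ
    have hJI : WCIdl (S := S) J := by
      refine ⟨⟨⊥, hmI.1, bot_le⟩, ?_, ?_⟩
      · rintro u v huv ⟨i, him, hvi⟩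
        exact ⟨i, him, le_trans huv hvi⟩
      · rintro u v ⟨i, him, hui⟩ ⟨j, hjm, hvj⟩
        refine ⟨i ⊔ j, hmI.2.2 i j him hjm, ?_⟩
        refine sup_le (le_trans hui ?_) (le_trans hvj ?_) <;>
          [exact sup_le_sup_right le_sup_left z; exact sup_le_sup_right le_sup_right z]
    have hmJ : m ⊆ J := fun w hw => ⟨w, hw, le_sup_left⟩
    by_cases haJ : a ∈ J
    · exact haJ
    · have hJ𝒮 : J ∈ 𝒮 := ⟨hJI, hmJ hcm, haJ⟩
      have := hm.2 hJ𝒮 hmJ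
      exact absurd (this ⟨⊥, hmI.1, le_sup_right⟩) hzm
  obtain ⟨i, him, hi⟩ := key x hxm
  obtain ⟨j, hjm, hj⟩ := key y hym
  have h1 : a ≤ (i ⊔ j) ⊔ x :=
    le_trans hi (sup_le_sup_right le_sup_left x)
  have h2 : a ≤ (i ⊔ j) ⊔ y :=
    le_trans hj (sup_le_sup_right le_sup_right y)
  have : a ≤ i ⊔ j := hD1 (i ⊔ j) a x y hnd h1 h2
  exact ham (hmI.2.1 a (i ⊔ j) this (hmI.2.2 i j him hjm))

end Aux

theorem stmt0 {S : Type} [SemilatticeSup S] [OrderBot S] (δS : S → S → Prop)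
    (hwc : IsWeakContact δS) (hD1 : CondD1 δS) :
    ∃ (B : Type) (_ : BooleanAlgebra B) (δB : B → B → Prop) (h : S → B),
      IsWeakContact δB ∧
      Function.Injective h ∧
      h ⊥ = ⊥ ∧
      (∀ a b : S, h (a ⊔ b) = h a ⊔ h b) ∧
      (∀ a b : S, δS a b ↔ δB (h a) (h b)) := by
  classical
  obtain ⟨hne, hrefl, hsymm, hext⟩ := hwc
  set h : S → Set (Set S) := fun a => {I | WCPt δS I ∧ a ∉ I} with hh
  set δB : Set (Set S) → Set (Set S) → Prop := fun U V =>
    U.Nonempty ∧ V.Nonempty ∧ ∀ c d : S, U ⊆ h c → V ⊆ h d → δS c d with hδB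
  -- key consequence: h a ⊆ h c → a ≤ c
  have hle : ∀ a c : S, h a ⊆ h c → a ≤ c := by
    intro a c hsub
    by_contra hac
    obtain ⟨I, hIpt, hcI, haI⟩ := wc_exists_pt δS hD1 hac
    exact (hsub ⟨hIpt, haI⟩).2 hcI
  have hnonempty : ∀ a : S, a ≠ ⊥ → (h a).Nonempty := by
    intro a ha
    have : ¬ a ≤ (⊥ : S) := fun hle' => ha (le_bot_iff.mp hle')
    obtain ⟨I, hIpt, _, haI⟩ := wc_exists_pt δS hD1 this
    exact ⟨I, hIpt, haI⟩
  refine ⟨Set (Set S), inferInstance, δB, h, ⟨?_, ?_, ?_, ?_⟩, ?_, ?_, ?_, ?_⟩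
  · -- δB a b → a ≠ ⊥ ∧ b ≠ ⊥
    rintro U V ⟨hU, hV, _⟩
    exact ⟨Set.nonempty_iff_ne_empty.mp hU, Set.nonempty_iff_ne_empty.mp hV⟩
  · -- reflexivity
    intro U hU
    have hUne : U.Nonempty := Set.nonempty_iff_ne_empty.mpr hU
    obtain ⟨I, hI⟩ := id hUne
    refine ⟨hUne, hUne, fun c d hc hd => ?_⟩
    exact (hc hI).1.2 c d (hc hI).2 (hd hI).2
  · rintro U V ⟨hU, hV, hcd⟩
    exact ⟨hV, hU, fun c d hc hd => hsymm d c (hcd d c hd hc)⟩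
  · rintro U V U₁ V₁ ⟨hU, hV, hcd⟩ hUU hVV
    exact ⟨hU.mono hUU, hV.mono hVV, fun c d hc hd =>
      hcd c d (Set.Subset.trans hUU hc) (Set.Subset.trans hVV hd)⟩
  · -- injective
    intro a b hab
    exact le_antisymm (hle a b (le_of_eq hab)) (hle b a (le_of_eq hab.symm))
  · -- h ⊥ = ⊥
    ext I
    simp only [hh, Set.mem_setOf_eq, Set.bot_eq_empty, Set.mem_empty_iff_false, iff_false,
      not_and]
    intro hIpt
    simp [hIpt.1.1]
  · -- join preservation
    intro a b
    ext I
    simp only [hh, Set.mem_setOf_eq, Set.sup_eq_union, Set.mem_union]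
    constructor
    · rintro ⟨hIpt, hab⟩
      by_cases ha : a ∈ I
      · by_cases hb : b ∈ I
        · exact absurd (hIpt.1.2.2 a b ha hb) hab
        · exact Or.inr ⟨hIpt, hb⟩
      · exact Or.inl ⟨hIpt, ha⟩
    · rintro (⟨hIpt, ha⟩ | ⟨hIpt, hb⟩)
      · exact ⟨hIpt, fun hmem => ha (hIpt.1.2.1 a (a ⊔ b) le_sup_left hmem)⟩
      · exact ⟨hIpt, fun hmem => hb (hIpt.1.2.1 b (a ⊔ b) le_sup_right hmem)⟩
  · -- δ reflection
    intro a b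
    constructor
    · intro hab
      obtain ⟨ha, hb⟩ := hne a b hab
      refine ⟨hnonempty a ha, hnonempty b hb, fun c d hc hd => ?_⟩
      exact hext a b c d hab (hle a c hc) (hle b d hd)
    · rintro ⟨_, _, hcd⟩
      exact hcd a b (le_refl _) (le_refl _)
end

section
/- Let S be a weak contact semilattice that can be embedded into a Boolean algebra equipped with a weak contact relation (i.e., there exist a Boolean algebra B, a weak contact relation δ_B on B, and an injective map h : S → B with h(0) = 0, h(a + b) = h(a) ⊔ h(b), and a δ_S b if and only if h(a) δ_B h(b)). Then S satisfies (D1). -/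
theorem stmt1 {S : Type} [SemilatticeSup S] [OrderBot S] (δS : S → S → Prop)
    (hwc : IsWeakContact δS)
    (hemb : ∃ (B : Type) (_ : BooleanAlgebra B) (δB : B → B → Prop) (h : S → B),
      IsWeakContact δB ∧
      Function.Injective h ∧
      h ⊥ = ⊥ ∧
      (∀ a b : S, h (a ⊔ b) = h a ⊔ h b) ∧
      (∀ a b : S, δS a b ↔ δB (h a) (h b))) :
    CondD1 δS := by
  obtain ⟨B, _, δB, h, ⟨hB0, hBrefl, _, hBext⟩, hinj, h0, hsup, hiff⟩ := hemb
  intro a b c₀ c₁ hnd hb0 hb1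
  -- h is monotone
  have hmono : ∀ x y : S, x ≤ y → h x ≤ h y := by
    intro x y hxy
    have : h y = h x ⊔ h y := by rw [← hsup, sup_eq_right.mpr hxy]
    rw [this]; exact le_sup_left
  set x : B := h b \ h a with hx
  have hx0 : x = ⊥ := by
    by_contra hxne
    have hxc0 : x ≤ h c₀ := by
      have := hmono b (a ⊔ c₀) hb0
      rw [hsup] at this
      exact sdiff_le_iff.mpr this
    have hxc1 : x ≤ h c₁ := by
      have := hmono b (a ⊔ c₁) hb1
      rw [hsup] at this
      exact sdiff_le_iff.mpr this
    exact hnd ((hiff c₀ c₁).mpr (hBext x x _ _ (hBrefl x hxne) hxc0 hxc1))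
  have hba : h b ≤ h a := by
    have : h b \ h a = ⊥ := hx0
    exact sdiff_eq_bot_iff.mp this
  have : h (a ⊔ b) = h a := by
    rw [hsup]; exact sup_eq_left.mpr hba
  have := hinj this
  exact le_of_sup_eq (by rwa [sup_comm] at this)
end

section
/- A weak contact semilattice S satisfies (D1) if and only if S can be embedded into a distributive lattice equipped with a weak contact relation; that is, if and only if there exist a distributive lattice D with least element 0, a weak contact relation δ_D on D, and an injective map h : S → D with h(0) = 0, h(a + b) = h(a) ⊔ h(b) for all a, b ∈ S, and a δ_S b if and only if h(a) δ_D h(b) for all a, b ∈ S. -/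
section Aux

variable {S : Type} [SemilatticeSup S] [OrderBot S] (δ : S → S → Prop)

/-- A prime clan: an upward-closed, join-prime, pairwise-δ-related set avoiding `⊥`. -/
def IsPrimeClan (P : Set S) : Prop :=
  (∀ x ∈ P, ∀ y, x ≤ y → y ∈ P) ∧
  (∀ x y : S, x ⊔ y ∈ P → x ∈ P ∨ y ∈ P) ∧
  (∀ x ∈ P, ∀ y ∈ P, δ x y) ∧
  (⊥ : S) ∉ P

/-- Separation lemma: under (D1), for `a ≰ b` there is a prime clan containing `a`
but not `b`. -/
theorem primeClan_separation (hd1 : CondD1 δ) {a b : S} (hab : ¬ a ≤ b) :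
    ∃ P : Set S, IsPrimeClan δ P ∧ a ∈ P ∧ b ∉ P := by
  -- family of ideals containing b and omitting a
  set F : Set (Set S) :=
    {J : Set S | b ∈ J ∧ a ∉ J ∧ (∀ x ∈ J, ∀ y, y ≤ x → y ∈ J) ∧
      (∀ x ∈ J, ∀ y ∈ J, x ⊔ y ∈ J)} with hF
  have hbF : {x : S | x ≤ b} ∈ F := by
    refine ⟨le_refl b, hab, ?_, ?_⟩
    · intro x hx y hy; exact le_trans hy hx
    · intro x hx y hy; exact sup_le hx hy
  obtain ⟨J, -, hJF, hJmax⟩ := zorn_subset_nonempty F (fun c hcF hc hcne => by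
      obtain ⟨J₀, hJ₀⟩ := hcne
      refine ⟨⋃₀ c, ⟨?_, ?_, ?_, ?_⟩, fun J hJ => Set.subset_sUnion_of_mem hJ⟩
      · exact ⟨J₀, hJ₀, (hcF hJ₀).1⟩
      · rintro ⟨J', hJ', haJ'⟩; exact (hcF hJ').2.1 haJ'
      · rintro x ⟨J', hJ', hxJ'⟩ y hy; exact ⟨J', hJ', (hcF hJ').2.2.1 x hxJ' y hy⟩
      · rintro x ⟨J₁, hJ₁, hx⟩ y ⟨J₂, hJ₂, hy⟩
        rcases hc.total hJ₁ hJ₂ with hle | hle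
        · exact ⟨J₂, hJ₂, (hcF hJ₂).2.2.2 x (hle hx) y hy⟩
        · exact ⟨J₁, hJ₁, (hcF hJ₁).2.2.2 x hx y (hle hy)⟩)
    _ hbF
  obtain ⟨hbJ, haJ, hdown, hjoin⟩ := hJF
  -- lemma: adding an element x ∉ J forces a in
  have key : ∀ x : S, x ∉ J → ∃ j ∈ J, a ≤ j ⊔ x := by
    intro x hxJ
    by_contra hno
    push_neg at hno
    have hJx : {z : S | ∃ j ∈ J, z ≤ j ⊔ x} ∈ F := by
      refine ⟨⟨b, hbJ, le_sup_left⟩, ?_, ?_, ?_⟩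
      · rintro ⟨j, hj, hle⟩; exact hno j hj hle
      · rintro z ⟨j, hj, hle⟩ y hy; exact ⟨j, hj, le_trans hy hle⟩
      · rintro z ⟨j, hj, hz⟩ w ⟨j', hj', hw⟩
        refine ⟨j ⊔ j', hjoin j hj j' hj', ?_⟩
        calc z ⊔ w ≤ (j ⊔ x) ⊔ (j' ⊔ x) := sup_le_sup hz hw
          _ = (j ⊔ j') ⊔ x := by
              rw [sup_sup_sup_comm, sup_idem]
    have hsub : J ⊆ {z : S | ∃ j ∈ J, z ≤ j ⊔ x} := fun j hj => ⟨j, hj, le_sup_left⟩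
    have hle := hJmax hJx hsub
    exact hxJ (hle ⟨b, hbJ, le_sup_right⟩)
  refine ⟨Jᶜ, ⟨?_, ?_, ?_, ?_⟩, haJ, fun hbc => hbc hbJ⟩
  · intro x hx y hxy hyJ; exact hx (hdown y hyJ x hxy)
  · intro x y hxy
    by_contra hcon
    push_neg at hcon
    obtain ⟨hx, hy⟩ := hcon
    simp only [Set.mem_compl_iff, not_not] at hx hy
    exact hxy (hjoin x hx y hy)
  · intro x hx y hy
    by_contra hnd
    obtain ⟨j₀, hj₀, ha₀⟩ := key x hx
    obtain ⟨j₁, hj₁, ha₁⟩ := key y hy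
    have h₀ : a ≤ (j₀ ⊔ j₁) ⊔ x :=
      le_trans ha₀ (sup_le_sup_right le_sup_left x)
    have h₁ : a ≤ (j₀ ⊔ j₁) ⊔ y :=
      le_trans ha₁ (sup_le_sup_right le_sup_right y)
    have := hd1 (j₀ ⊔ j₁) a x y hnd h₀ h₁
    exact haJ (hdown _ (hjoin j₀ hj₀ j₁ hj₁) a this)
  · intro hbotc
    exact hbotc (hdown b hbJ ⊥ bot_le)

end Aux

theorem stmt2 {S : Type} [SemilatticeSup S] [OrderBot S] (δS : S → S → Prop)
    (hwc : IsWeakContact δS) :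
    CondD1 δS ↔
      ∃ (D : Type) (_ : DistribLattice D) (_ : OrderBot D) (δD : D → D → Prop) (h : S → D),
        IsWeakContact δD ∧
        Function.Injective h ∧
        h ⊥ = ⊥ ∧
        (∀ a b : S, h (a ⊔ b) = h a ⊔ h b) ∧
        (∀ a b : S, δS a b ↔ δD (h a) (h b)) := by
  obtain ⟨hne, hrefl, hsymm, hext⟩ := hwc
  constructor
  · intro hd1
    -- X : the type of prime clans
    refine ⟨Set {P : Set S // IsPrimeClan δS P}, inferInstance, inferInstance,
      fun A B => A.Nonempty ∧ B.Nonempty ∧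
        (∀ c₀ c₁ : S, A ⊆ {P | c₀ ∈ P.1} → B ⊆ {P | c₁ ∈ P.1} → δS c₀ c₁),
      fun a => {P | a ∈ P.1}, ?_, ?_, ?_, ?_, ?_⟩
    case refine_4 =>
      intro a b
      ext P
      simp only [Set.mem_setOf_eq, Set.mem_union]
      constructor
      · intro hab; exact P.2.2.1 a b hab
      · rintro (ha | hb)
        · exact P.2.1 a ha (a ⊔ b) le_sup_left
        · exact P.2.1 b hb (a ⊔ b) le_sup_right
    -- order reflection
    all_goals
      have hmono : ∀ a b : S, a ≤ b → {P : {P : Set S // IsPrimeClan δS P} | a ∈ P.1}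
          ⊆ {P | b ∈ P.1} := fun a b hab P hP => P.2.1 a hP b hab
    all_goals
      have hrefle : ∀ a b : S,
          ({P : {P : Set S // IsPrimeClan δS P} | a ∈ P.1} ⊆ {P | b ∈ P.1}) → a ≤ b := by
        intro a b hsub
        by_contra hab
        obtain ⟨P, hP, haP, hbP⟩ := primeClan_separation δS hd1 hab
        have hmem : (⟨P, hP⟩ : {P : Set S // IsPrimeClan δS P}) ∈
            {Q : {P : Set S // IsPrimeClan δS P} | a ∈ Q.1} := haP
        exact hbP (hsub hmem)
    case refine_1 =>
      refine ⟨?_, ?_, ?_, ?_⟩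
      · intro A B hAB
        constructor
        · exact Set.nonempty_iff_ne_empty.mp hAB.1
        · exact Set.nonempty_iff_ne_empty.mp hAB.2.1
      · intro A hA
        have hA' : A.Nonempty := Set.nonempty_iff_ne_empty.mpr hA
        refine ⟨hA', hA', ?_⟩
        intro c₀ c₁ h₀ h₁
        obtain ⟨P, hP⟩ := hA'
        exact P.2.2.2.1 c₀ (h₀ hP) c₁ (h₁ hP)
      · rintro A B ⟨hA, hB, hcl⟩
        exact ⟨hB, hA, fun c₀ c₁ h₀ h₁ => hsymm _ _ (hcl c₁ c₀ h₁ h₀)⟩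
      · rintro A B A₁ B₁ ⟨hA, hB, hcl⟩ hAA hBB
        exact ⟨hA.mono hAA, hB.mono hBB,
          fun c₀ c₁ h₀ h₁ => hcl c₀ c₁ (hAA.trans h₀) (hBB.trans h₁)⟩
    case refine_2 =>
      intro a b hab
      have h1 : a ≤ b := hrefle a b (le_of_eq hab)
      have h2 : b ≤ a := hrefle b a (le_of_eq hab.symm)
      exact le_antisymm h1 h2
    case refine_3 =>
      ext P
      simp only [Set.mem_setOf_eq]
      constructor
      · intro hbot; exact absurd hbot P.2.2.2.2
      · intro hP; exact absurd hP (Set.notMem_empty P)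
    case refine_5 =>
      intro a b
      constructor
      · intro hab
        obtain ⟨ha, hb⟩ := hne a b hab
        have hane : ¬ a ≤ (⊥ : S) := fun hle => ha (le_bot_iff.mp hle)
        have hbne : ¬ b ≤ (⊥ : S) := fun hle => hb (le_bot_iff.mp hle)
        obtain ⟨P, hP, haP, -⟩ := primeClan_separation δS hd1 hane
        obtain ⟨Q, hQ, hbQ, -⟩ := primeClan_separation δS hd1 hbne
        refine ⟨⟨⟨P, hP⟩, haP⟩, ⟨⟨Q, hQ⟩, hbQ⟩, ?_⟩
        intro c₀ c₁ h₀ h₁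
        exact hext a b c₀ c₁ hab (hrefle a c₀ h₀) (hrefle b c₁ h₁)
      · rintro ⟨-, -, hcl⟩
        exact hcl a b (fun P hP => hP) (fun P hP => hP)
  · rintro ⟨D, dl, ob, δD, h, ⟨hneD, hreflD, hsymmD, hextD⟩, hinj, hbot, hsup, hiff⟩
    intro a b c₀ c₁ hnd hb0 hb1
    have hmono : ∀ x y : S, x ≤ y → h x ≤ h y := by
      intro x y hxy
      have : h y = h x ⊔ h y := by rw [← hsup, sup_eq_right.mpr hxy]
      rw [this]; exact le_sup_left
    have hrefle : ∀ x y : S, h x ≤ h y → x ≤ y := by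
      intro x y hxy
      have : h (x ⊔ y) = h y := by rw [hsup, sup_eq_right.mpr hxy]
      have := hinj this
      exact sup_eq_right.mp this
    have hmeet : h c₀ ⊓ h c₁ = ⊥ := by
      by_contra hmb
      have hd : δD (h c₀ ⊓ h c₁) (h c₀ ⊓ h c₁) := hreflD _ hmb
      have : δD (h c₀) (h c₁) := hextD _ _ _ _ hd inf_le_left inf_le_right
      exact hnd ((hiff c₀ c₁).mpr this)
    have : h b ≤ (h a ⊔ h c₀) ⊓ (h a ⊔ h c₁) :=
      le_inf (le_trans (hmono b _ hb0) (by rw [hsup])) (le_trans (hmono b _ hb1) (by rw [hsup]))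
    rw [← sup_inf_left, hmeet, sup_bot_eq] at this
    exact hrefle b a this
end

section
/- A weak contact semilattice S satisfies (D1) if and only if S can be embedded into a complete atomic Boolean algebra equipped with a weak contact relation; concretely, if and only if there exist a set X, a weak contact relation δ_P on the powerset of X (ordered by inclusion, with least element ∅), and an injective map h : S → 𝒫(X) with h(0) = ∅, h(a + b) = h(a) ∪ h(b) for all a, b ∈ S, and a δ_S b if and only if h(a) δ_P h(b) for all a, b ∈ S. -/
/-- A "good ideal": an ideal whose complement is pairwise δ-related. -/
def GoodIdl {S : Type} [SemilatticeSup S] [OrderBot S] (δS : S → S → Prop) (I : Set S) : Prop :=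
  (⊥ ∈ I) ∧ (∀ x y : S, y ∈ I → x ≤ y → x ∈ I) ∧ (∀ x y : S, x ∈ I → y ∈ I → x ⊔ y ∈ I) ∧
  (∀ x y : S, x ∉ I → y ∉ I → δS x y)

/-- Separation lemma: if `¬ a ≤ b`, there is a good ideal containing `b` but not `a`. -/
lemma sep_goodIdl {S : Type} [SemilatticeSup S] [OrderBot S] {δS : S → S → Prop}
    (hwc : IsWeakContact δS) (hD1 : CondD1 δS) {a b : S} (hab : ¬ a ≤ b) :
    ∃ I : Set S, GoodIdl δS I ∧ b ∈ I ∧ a ∉ I := by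
  obtain ⟨hne, hrefl, hsymm, hext⟩ := hwc
  set T : Set (Set S) :=
    { I | (⊥ ∈ I) ∧ (∀ x y : S, y ∈ I → x ≤ y → x ∈ I) ∧
          (∀ x y : S, x ∈ I → y ∈ I → x ⊔ y ∈ I) ∧ b ∈ I ∧ a ∉ I } with hT
  have hbase : {z : S | z ≤ b} ∈ T := by
    refine ⟨bot_le, fun x y hy hxy => le_trans hxy hy, fun x y hx hy => sup_le hx hy,
      le_refl b, hab⟩
  have hchainub : ∀ c ⊆ T, IsChain (· ⊆ ·) c → c.Nonempty →
      ∃ ub ∈ T, ∀ s ∈ c, s ⊆ ub := by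
    intro c hcT hchain hcne
    obtain ⟨I₀, hI₀⟩ := hcne
    refine ⟨⋃₀ c, ⟨⟨I₀, hI₀, (hcT hI₀).1⟩, ?_, ?_, ⟨I₀, hI₀, (hcT hI₀).2.2.2.1⟩, ?_⟩,
      fun s hs => Set.subset_sUnion_of_mem hs⟩
    · rintro x y ⟨J, hJ, hyJ⟩ hxy
      exact ⟨J, hJ, (hcT hJ).2.1 x y hyJ hxy⟩
    · rintro x y ⟨J, hJ, hxJ⟩ ⟨K, hK, hyK⟩
      rcases hchain.total hJ hK with h | h
      · exact ⟨K, hK, (hcT hK).2.2.1 x y (h hxJ) hyK⟩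
      · exact ⟨J, hJ, (hcT hJ).2.2.1 x y hxJ (h hyK)⟩
    · rintro ⟨J, hJ, haJ⟩
      exact (hcT hJ).2.2.2.2 haJ
  obtain ⟨I, hbI, hImem, hImax⟩ := zorn_subset_nonempty T hchainub _ hbase
  · obtain ⟨hbot, hdown, hsup, hbIn, haIn⟩ := hImem
    refine ⟨I, ⟨hbot, hdown, hsup, ?_⟩, hbIn, haIn⟩
    intro x y hx hy
    by_contra hδ
    -- ideal generated by I and x contains a
    have key : ∀ z : S, z ∉ I → ∃ w ∈ I, a ≤ w ⊔ z := by
      intro z hz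
      set J : Set S := { u | ∃ w ∈ I, u ≤ w ⊔ z } with hJ
      by_contra hcon
      push_neg at hcon
      have haJ : a ∉ J := by
        rintro ⟨w, hw, hle⟩; exact hcon w hw hle
      have hJT : J ∈ T := by
        refine ⟨⟨⊥, hbot, bot_le⟩, ?_, ?_, ⟨b, hbIn, le_sup_left⟩, haJ⟩
        · rintro u v ⟨w, hw, hv⟩ huv; exact ⟨w, hw, le_trans huv hv⟩
        · rintro u v ⟨w, hw, hu⟩ ⟨w', hw', hv⟩
          exact ⟨w ⊔ w', hsup _ _ hw hw', sup_le
            (le_trans hu (sup_le_sup_right le_sup_left z))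
            (le_trans hv (sup_le_sup_right le_sup_right z))⟩
      have hIJ : I ⊆ J := fun u hu => ⟨u, hu, le_sup_left⟩
      have hJI : J ⊆ I := hImax hJT hIJ
      exact hz (hJI ⟨b, hbIn, le_sup_right⟩)
    obtain ⟨w, hw, hwle⟩ := key x hx
    obtain ⟨w', hw', hw'le⟩ := key y hy
    have h1 : a ≤ (w ⊔ w') ⊔ x :=
      le_trans hwle (sup_le_sup_right le_sup_left x)
    have h2 : a ≤ (w ⊔ w') ⊔ y :=
      le_trans hw'le (sup_le_sup_right le_sup_right y)
    have := hD1 (w ⊔ w') a x y hδ h1 h2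
    exact haIn (hdown a (w ⊔ w') (hsup _ _ hw hw') this)

theorem stmt3 {S : Type} [SemilatticeSup S] [OrderBot S] (δS : S → S → Prop)
    (hwc : IsWeakContact δS) :
    CondD1 δS ↔
      ∃ (X : Type) (δP : Set X → Set X → Prop) (h : S → Set X),
        IsWeakContact δP ∧
        Function.Injective h ∧
        h ⊥ = ∅ ∧
        (∀ a b : S, h (a ⊔ b) = h a ∪ h b) ∧
        (∀ a b : S, δS a b ↔ δP (h a) (h b)) := by
  obtain ⟨hne, hrefl, hsymm, hext⟩ := hwc
  constructor
  · intro hD1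
    set X := { I : Set S // GoodIdl δS I } with hX
    set h : S → Set X := fun a => { I : X | a ∉ I.1 } with hh
    -- order reflection
    have hsep : ∀ a b : S, ¬ a ≤ b → ∃ I : X, a ∉ I.1 ∧ b ∈ I.1 := by
      intro a b hab
      obtain ⟨I, hI, hbI, haI⟩ := sep_goodIdl ⟨hne, hrefl, hsymm, hext⟩ hD1 hab
      exact ⟨⟨I, hI⟩, haI, hbI⟩
    have hmono : ∀ a b : S, a ≤ b → h a ⊆ h b := by
      intro a b hab I hI
      exact fun hbI => hI (I.2.2.1 a b hbI hab)
    have hrefl' : ∀ a b : S, h a ⊆ h b → a ≤ b := by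
      intro a b hab
      by_contra hle
      obtain ⟨I, haI, hbI⟩ := hsep a b hle
      exact hab haI hbI
    set δP : Set X → Set X → Prop := fun A B =>
      (∃ a b : S, δS a b ∧ h a ⊆ A ∧ h b ⊆ B) ∨ (A ∩ B).Nonempty with hδP
    have hne' : ∀ a : S, a ≠ ⊥ → (h a).Nonempty := by
      intro a ha
      obtain ⟨I, haI, _⟩ := hsep a ⊥ (fun hle => ha (le_bot_iff.mp hle))
      exact ⟨I, haI⟩
    refine ⟨X, δP, h, ⟨?_, ?_, ?_, ?_⟩, ?_, ?_, ?_, ?_⟩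
    · -- nonbot
      rintro A B (⟨a, b, hab, hA, hB⟩ | ⟨x, hx⟩)
      · obtain ⟨ha, hb⟩ := hne a b hab
        obtain ⟨I, hI⟩ := hne' a ha
        obtain ⟨J, hJ⟩ := hne' b hb
        refine ⟨fun hbot => ?_, fun hbot => ?_⟩
        · have := hA hI; rw [hbot] at this; simp at this
        · have := hB hJ; rw [hbot] at this; simp at this
      · exact ⟨fun hbot => by simp [hbot] at hx, fun hbot => by simp [hbot] at hx⟩
    · -- refl
      intro A hA
      rcases Set.eq_empty_or_nonempty A with hAe | ⟨x, hx⟩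
      · exact absurd hAe hA
      · exact Or.inr ⟨x, hx, hx⟩
    · -- symm
      rintro A B (⟨a, b, hab, hA, hB⟩ | ⟨x, hx1, hx2⟩)
      · exact Or.inl ⟨b, a, hsymm a b hab, hB, hA⟩
      · exact Or.inr ⟨x, hx2, hx1⟩
    · -- ext
      rintro A B A₁ B₁ (⟨a, b, hab, hA, hB⟩ | ⟨x, hx1, hx2⟩) hAA hBB
      · exact Or.inl ⟨a, b, hab, hA.trans hAA, hB.trans hBB⟩
      · exact Or.inr ⟨x, hAA hx1, hBB hx2⟩
    · -- injective
      intro a b hab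
      exact le_antisymm (hrefl' a b (le_of_eq hab)) (hrefl' b a (le_of_eq hab.symm))
    · -- h ⊥ = ∅
      ext I
      simp only [hh, Set.mem_setOf_eq, Set.mem_empty_iff_false, iff_false, not_not]
      exact I.2.1
    · -- joins
      intro a b
      ext I
      simp only [hh, Set.mem_setOf_eq, Set.mem_union]
      constructor
      · intro hsup
        by_contra hcon
        push_neg at hcon
        obtain ⟨ha, hb⟩ := hcon
        exact hsup (I.2.2.2.1 a b ha hb)
      · rintro (ha | hb) hsupI
        · exact ha (I.2.2.1 a (a ⊔ b) hsupI le_sup_left)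
        · exact hb (I.2.2.1 b (a ⊔ b) hsupI le_sup_right)
    · -- δ correspondence
      intro a b
      constructor
      · intro hab
        exact Or.inl ⟨a, b, hab, le_refl _, le_refl _⟩
      · rintro (⟨a', b', hab', hA, hB⟩ | ⟨I, hIa, hIb⟩)
        · exact hext a' b' a b hab' (hrefl' a' a hA) (hrefl' b' b hB)
        · exact I.2.2.2.2 a b hIa hIb
  · rintro ⟨X, δP, h, ⟨hPne, hPrefl, hPsymm, hPext⟩, hinj, hbot, hjoin, hiff⟩
    intro c₀ a c₁' c₂' hδ h1 h2
    -- h is order preserving and reflecting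
    have hmono : ∀ x y : S, x ≤ y → h x ⊆ h y := by
      intro x y hxy
      have : x ⊔ y = y := sup_eq_right.mpr hxy
      have := hjoin x y
      rw [sup_eq_right.mpr hxy] at this
      rw [this]; exact Set.subset_union_left
    have hrefl' : ∀ x y : S, h x ⊆ h y → x ≤ y := by
      intro x y hxy
      have : h (x ⊔ y) = h y := by
        rw [hjoin]; exact Set.union_eq_self_of_subset_left hxy
      have := hinj this
      exact le_of_sup_eq this
    apply hrefl'
    intro p hp
    by_contra hpc
    have hp1 : p ∈ h c₁' := by
      have := hmono a (c₀ ⊔ c₁') h1 hp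
      rw [hjoin] at this
      rcases this with h | h
      · exact absurd h hpc
      · exact h
    have hp2 : p ∈ h c₂' := by
      have := hmono a (c₀ ⊔ c₂') h2 hp
      rw [hjoin] at this
      rcases this with h | h
      · exact absurd h hpc
      · exact h
    have hsing : ({p} : Set X) ≠ ⊥ := by
      rw [Set.bot_eq_empty]; exact Set.singleton_ne_empty p
    have := hPext {p} {p} (h c₁') (h c₂') (hPrefl {p} hsing)
      (Set.singleton_subset_iff.mpr hp1) (Set.singleton_subset_iff.mpr hp2)
    exact hδ ((hiff c₁' c₂').mpr this)
end

section
/- Let S be a weak contact semilattice satisfying (D1). Then S satisfies (D1+): for every positive integer n and all elements a, b, c_{1,0}, c_{1,1}, …, c_{n,0}, c_{n,1} ∈ S, if ¬(c_{i,0} δ c_{i,1}) for every i ∈ {1, …, n}, and b ≤ a + c_{1,f(1)} + ⋯ + c_{n,f(n)} for every function f : {1, …, n} → {0, 1}, then b ≤ a. -/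
/-- Condition (D1+). -/
def CondD1plus {S : Type*} [SemilatticeSup S] [OrderBot S] (δ : S → S → Prop) : Prop :=
  ∀ n : ℕ, 0 < n → ∀ (a b : S) (c : Fin n → Bool → S),
    (∀ i, ¬ δ (c i false) (c i true)) →
    (∀ f : Fin n → Bool, b ≤ a ⊔ Finset.univ.sup (fun i => c i (f i))) →
    b ≤ a

theorem sup_castSucc' {S : Type*} [SemilatticeSup S] [OrderBot S] (n : ℕ) (g : Fin (n+1) → S) :
    Finset.univ.sup g = (Finset.univ.sup fun i : Fin n => g i.castSucc) ⊔ g (Fin.last n) := by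
  apply le_antisymm
  · apply Finset.sup_le
    intro i _
    induction i using Fin.lastCases with
    | last => exact le_sup_right
    | cast j =>
        exact le_trans (Finset.le_sup (f := fun i : Fin n => g i.castSucc)
          (Finset.mem_univ j)) le_sup_left
  · apply sup_le
    · exact Finset.sup_le fun j _ => Finset.le_sup (Finset.mem_univ j.castSucc)
    · exact Finset.le_sup (Finset.mem_univ _)

theorem stmt4 {S : Type*} [SemilatticeSup S] [OrderBot S] (δS : S → S → Prop)
    (hwc : IsWeakContact δS) (hD1 : CondD1 δS) :
    CondD1plus δS := by
  intro n
  induction n with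
  | zero => exact fun h => absurd h (lt_irrefl 0)
  | succ n ih =>
    intro _ a b c hδ hle
    have h1 : ∀ f' : Fin n → Bool,
        b ≤ a ⊔ Finset.univ.sup (fun i : Fin n => c i.castSucc (f' i)) := by
      intro f'
      apply hD1 _ _ (c (Fin.last n) false) (c (Fin.last n) true) (hδ (Fin.last n))
      · have := hle (Fin.snoc f' false)
        rw [sup_castSucc'] at this
        simpa [Fin.snoc_castSucc, Fin.snoc_last, sup_assoc] using this
      · have := hle (Fin.snoc f' true)
        rw [sup_castSucc'] at this
        simpa [Fin.snoc_castSucc, Fin.snoc_last, sup_assoc] using this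
    rcases Nat.eq_zero_or_pos n with hn | hn
    · subst hn
      simpa using h1 (fun _ => false)
    · exact ih hn a b (fun i bv => c i.castSucc bv) (fun i => hδ i.castSucc) h1
end

section
/- Let S be a weak contact semilattice satisfying (D1), let n be a positive integer and let a, b, c_{1,0}, c_{1,1}, …, c_{n,0}, c_{n,1} ∈ S satisfy: ¬(c_{i,0} δ c_{i,1}) for every i ∈ {1, …, n}; b ≤ c_{1,f(1)} + ⋯ + c_{n,f(n)} for every f : {1, …, n} → {0, 1} with f(1) = 0; and a ≤ c_{1,f(1)} + ⋯ + c_{n,f(n)} for every f : {1, …, n} → {0, 1} with f(1) = 1. Then b ≤ c_{1,0}, a ≤ c_{1,1}, and consequently ¬(b δ a). -/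
theorem stmt5 {S : Type*} [SemilatticeSup S] [OrderBot S] (δS : S → S → Prop)
    (hwc : IsWeakContact δS) (hD1 : CondD1 δS)
    (n : ℕ) (hn : 0 < n) (a b : S) (c : Fin n → Bool → S)
    (hc : ∀ i, ¬ δS (c i false) (c i true))
    (hb : ∀ f : Fin n → Bool, f ⟨0, hn⟩ = false →
      b ≤ Finset.univ.sup (fun i => c i (f i)))
    (ha : ∀ f : Fin n → Bool, f ⟨0, hn⟩ = true →
      a ≤ Finset.univ.sup (fun i => c i (f i))) :
    b ≤ c ⟨0, hn⟩ false ∧ a ≤ c ⟨0, hn⟩ true ∧ ¬ δS b a := by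
  obtain ⟨hne, hrefl, hsymm, hext⟩ := hwc
  set z : Fin n := ⟨0, hn⟩ with hzdef
  have key : ∀ (x : S) (v : Bool),
      (∀ f : Fin n → Bool, f z = v → x ≤ Finset.univ.sup (fun i => c i (f i))) →
      x ≤ c z v := by
    intro x v hx
    have main : ∀ s : Finset (Fin n), z ∈ s →
        (∀ f : Fin n → Bool, f z = v → x ≤ s.sup (fun i => c i (f i))) →
        x ≤ c z v := by
      intro s
      induction s using Finset.strongInductionOn with
      | _ s ih =>
        intro hzs hA
        by_cases hs : s = {z}
        · have := hA (fun _ => v) rfl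
          simpa [hs] using this
        · have hex : ∃ i ∈ s, i ≠ z := by
            by_contra h
            push_neg at h
            exact hs (Finset.eq_singleton_iff_unique_mem.mpr ⟨hzs, fun i hi => h i hi⟩)
          obtain ⟨i, his, hiz⟩ := hex
          refine ih (s.erase i) (Finset.erase_ssubset his)
            (Finset.mem_erase.mpr ⟨Ne.symm hiz, hzs⟩) ?_
          intro f hf
          have step : ∀ w : Bool, x ≤ (s.erase i).sup (fun j => c j (f j)) ⊔ c i w := by
            intro w
            have hfw : Function.update f i w z = v := by
              rw [Function.update_of_ne (Ne.symm hiz)]; exact hf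
            have h1 := hA (Function.update f i w) hfw
            have hsup : s.sup (fun j => c j (Function.update f i w j)) =
                (s.erase i).sup (fun j => c j (f j)) ⊔ c i w := by
              rw [← Finset.insert_erase his, Finset.sup_insert, Function.update_self,
                sup_comm]
              congr 1
              · rw [Finset.erase_insert_eq_erase, Finset.erase_idem]
                exact Finset.sup_congr rfl fun j hj => by
                  rw [Function.update_of_ne (Finset.ne_of_mem_erase hj)]
            rwa [hsup] at h1
          exact hD1 _ _ _ _ (hc i) (step false) (step true)
    exact main Finset.univ (Finset.mem_univ z) hx
  have hb' := key b false hb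
  have ha' := key a true ha
  exact ⟨hb', ha', fun hδ => hc z (hext _ _ _ _ hδ hb' ha')⟩
end

section
/- Let S be a poset with least element 0 carrying a weak contact relation δ_S, let Q be a poset with least element 0, and let κ : S → Q be an order-preserving map such that a = 0 if and only if κ(a) = 0, for every a ∈ S. Define δ_Q on Q by: b₁ δ_Q b₂ if and only if either (a) there is q ∈ Q with 0 < q, q ≤ b₁ and q ≤ b₂, or (b) there are a₁, a₂ ∈ S with a₁ δ_S a₂, κ(a₁) ≤ b₁ and κ(a₂) ≤ b₂. Then δ_Q is a weak contact relation on Q, κ is a contact homomorphism (a₁ δ_S a₂ implies κ(a₁) δ_Q κ(a₂)), and δ_Q is the smallest weak contact relation on Q making κ a contact homomorphism (i.e., any weak contact relation δ' on Q with a₁ δ_S a₂ implying κ(a₁) δ' κ(a₂) contains δ_Q). -/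
theorem stmt6 {S Q : Type*} [PartialOrder S] [OrderBot S] [PartialOrder Q] [OrderBot Q]
    (δS : S → S → Prop) (hwc : IsWeakContact δS)
    (κ : S → Q) (hmono : Monotone κ) (hzero : ∀ a : S, a = ⊥ ↔ κ a = ⊥)
    (δQ : Q → Q → Prop)
    (hδQ : ∀ b₁ b₂ : Q, δQ b₁ b₂ ↔
      (∃ q : Q, ⊥ < q ∧ q ≤ b₁ ∧ q ≤ b₂) ∨
      (∃ a₁ a₂ : S, δS a₁ a₂ ∧ κ a₁ ≤ b₁ ∧ κ a₂ ≤ b₂)) :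
    IsWeakContact δQ ∧
    (∀ a₁ a₂ : S, δS a₁ a₂ → δQ (κ a₁) (κ a₂)) ∧
    (∀ δ' : Q → Q → Prop, IsWeakContact δ' →
      (∀ a₁ a₂ : S, δS a₁ a₂ → δ' (κ a₁) (κ a₂)) →
      ∀ b₁ b₂ : Q, δQ b₁ b₂ → δ' b₁ b₂) := by
  obtain ⟨hS0, hSrefl, hSsymm, hSext⟩ := hwc
  refine ⟨⟨?_, ?_, ?_, ?_⟩, ?_, ?_⟩
  · intro a b h
    rw [hδQ] at h
    rcases h with ⟨q, hq, h1, h2⟩ | ⟨a₁, a₂, hδ, h1, h2⟩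
    · exact ⟨fun hb => hq.ne' (le_antisymm (hb ▸ h1) bot_le),
        fun hb => hq.ne' (le_antisymm (hb ▸ h2) bot_le)⟩
    · obtain ⟨ha₁, ha₂⟩ := hS0 _ _ hδ
      constructor
      · intro hb; exact ha₁ ((hzero a₁).mpr (le_antisymm (hb ▸ h1) bot_le))
      · intro hb; exact ha₂ ((hzero a₂).mpr (le_antisymm (hb ▸ h2) bot_le))
  · intro a ha
    rw [hδQ]
    exact Or.inl ⟨a, bot_lt_iff_ne_bot.mpr ha, le_rfl, le_rfl⟩
  · intro a b h
    rw [hδQ] at h ⊢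
    rcases h with ⟨q, hq, h1, h2⟩ | ⟨a₁, a₂, hδ, h1, h2⟩
    · exact Or.inl ⟨q, hq, h2, h1⟩
    · exact Or.inr ⟨a₂, a₁, hSsymm _ _ hδ, h2, h1⟩
  · intro a b a₁ b₁ h ha hb
    rw [hδQ] at h ⊢
    rcases h with ⟨q, hq, h1, h2⟩ | ⟨x, y, hδ, h1, h2⟩
    · exact Or.inl ⟨q, hq, h1.trans ha, h2.trans hb⟩
    · exact Or.inr ⟨x, y, hδ, h1.trans ha, h2.trans hb⟩
  · intro a₁ a₂ h
    rw [hδQ]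
    exact Or.inr ⟨a₁, a₂, h, le_rfl, le_rfl⟩
  · intro δ' ⟨h0', hrefl', _, hext'⟩ hhom b₁ b₂ h
    rw [hδQ] at h
    rcases h with ⟨q, hq, h1, h2⟩ | ⟨x, y, hδ, h1, h2⟩
    · exact hext' q q b₁ b₂ (hrefl' q hq.ne') h1 h2
    · exact hext' _ _ _ _ (hhom x y hδ) h1 h2
end

section
/- Let S be a poset with least element 0 carrying a weak contact relation δ_S, let Q be a poset with least element 0, and let κ : S → Q be an order embedding (a ≤ b if and only if κ(a) ≤ κ(b)) with κ(a) = 0 if and only if a = 0. Let δ_Q be defined on Q by: b₁ δ_Q b₂ if and only if either (a) there is q ∈ Q with 0 < q, q ≤ b₁ and q ≤ b₂, or (b) there are a₁, a₂ ∈ S with a₁ δ_S a₂, κ(a₁) ≤ b₁ and κ(a₂) ≤ b₂. Assume moreover that whenever ¬(a₁ δ_S a₂), the meet of κ(a₁) and κ(a₂) in Q exists and equals 0. Then κ is a contact embedding from S into (Q, δ_Q): that is, a₁ δ_S a₂ if and only if κ(a₁) δ_Q κ(a₂), for all a₁, a₂ ∈ S. -/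
theorem stmt7 {S Q : Type*} [PartialOrder S] [OrderBot S] [PartialOrder Q] [OrderBot Q]
    (δS : S → S → Prop) (hwc : IsWeakContact δS)
    (κ : S → Q) (hemb : ∀ a b : S, a ≤ b ↔ κ a ≤ κ b)
    (hzero : ∀ a : S, κ a = ⊥ ↔ a = ⊥)
    (δQ : Q → Q → Prop)
    (hδQ : ∀ b₁ b₂ : Q, δQ b₁ b₂ ↔
      (∃ q : Q, ⊥ < q ∧ q ≤ b₁ ∧ q ≤ b₂) ∨
      (∃ a₁ a₂ : S, δS a₁ a₂ ∧ κ a₁ ≤ b₁ ∧ κ a₂ ≤ b₂))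
    (hmeet : ∀ a₁ a₂ : S, ¬ δS a₁ a₂ → IsGLB {κ a₁, κ a₂} (⊥ : Q)) :
    ∀ a₁ a₂ : S, δS a₁ a₂ ↔ δQ (κ a₁) (κ a₂) := by
  obtain ⟨_, _, _, hmono⟩ := hwc
  intro a₁ a₂
  constructor
  · intro h
    exact (hδQ _ _).mpr (Or.inr ⟨a₁, a₂, h, le_refl _, le_refl _⟩)
  · intro h
    rcases (hδQ _ _).mp h with ⟨q, hq, h1, h2⟩ | ⟨b₁, b₂, hb, h1, h2⟩
    · by_contra hn
      have := (hmeet a₁ a₂ hn).2 (by rintro x (rfl|rfl); exact h1; exact h2)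
      exact absurd (le_antisymm this bot_le) hq.ne'
    · exact hmono b₁ b₂ a₁ a₂ hb ((hemb _ _).mpr h1) ((hemb _ _).mpr h2)
end

section
/- For every integer n ≥ 2 there exists a weak contact semilattice S that satisfies (D1+) and satisfies (D2_m) for every positive integer m < n, but does not satisfy (D2_n). -/
/-- Condition (D2_n). -/
def CondD2 {S : Type*} [SemilatticeSup S] [OrderBot S] (n : ℕ) (δ : S → S → Prop) : Prop :=
  ∀ (a b : S) (c : Fin n → Bool → S),
    (∀ i, ¬ δ (c i false) (c i true)) →
    (∀ f : Fin n → Bool,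
      b ≤ Finset.univ.sup (fun i => c i (f i)) ∨ a ≤ Finset.univ.sup (fun i => c i (f i))) →
    ¬ δ b a

namespace Stmt8Aux

variable (n : ℕ)

/-- The underlying point set: `Sum.inr true` is the point `x`, `Sum.inr false` is the
point `z`, and `Sum.inl i` is the point `yᵢ`. -/
abbrev X := Fin n ⊕ Bool

/-- The generator `a = {x, z}`. -/
def A : Set (X n) := {Sum.inr true, Sum.inr false}

/-- The generator `b = {y₁, …, yₙ}`. -/
def B : Set (X n) := Set.range Sum.inl

/-- The generator `c_{i,0} = {yᵢ, z}`. -/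
def C0 (i : Fin n) : Set (X n) := {Sum.inl i, Sum.inr false}

/-- The generator `c_{i,1} = {x} ∪ {y_k : k ≠ i}`. -/
def C1 (i : Fin n) : Set (X n) :=
  insert (Sum.inr true) {p | ∃ k, k ≠ i ∧ p = Sum.inl k}

def IsGen (g : Set (X n)) : Prop :=
  g = A n ∨ g = B n ∨ (∃ i, g = C0 n i) ∨ (∃ i, g = C1 n i)

/-- `s` belongs to the generated join-subsemilattice: every point of `s` is contained
in a generator included in `s`. -/
def Gen (s : Set (X n)) : Prop := ∀ p ∈ s, ∃ g, IsGen n g ∧ g ⊆ s ∧ p ∈ g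

/-- The carrier of the counterexample semilattice. -/
def S := {s : Set (X n) // Gen n s}

variable {n}

lemma gen_union {s t : Set (X n)} (hs : Gen n s) (ht : Gen n t) : Gen n (s ∪ t) := by
  intro p hp
  rcases hp with hp | hp
  · obtain ⟨g, h1, h2, h3⟩ := hs p hp
    exact ⟨g, h1, h2.trans Set.subset_union_left, h3⟩
  · obtain ⟨g, h1, h2, h3⟩ := ht p hp
    exact ⟨g, h1, h2.trans Set.subset_union_right, h3⟩

lemma gen_empty : Gen n (∅ : Set (X n)) := fun p hp => absurd hp (Set.notMem_empty p)

lemma gen_of_isGen {g : Set (X n)} (hg : IsGen n g) : Gen n g :=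
  fun _ hp => ⟨g, hg, subset_rfl, hp⟩

instance : PartialOrder (S n) := inferInstanceAs (PartialOrder {s : Set (X n) // Gen n s})

instance : SemilatticeSup (S n) :=
  { (inferInstance : PartialOrder (S n)) with
    sup := fun s t => ⟨s.1 ∪ t.1, gen_union s.2 t.2⟩
    le_sup_left := fun s t => show s.1 ⊆ s.1 ∪ t.1 from Set.subset_union_left
    le_sup_right := fun s t => show t.1 ⊆ s.1 ∪ t.1 from Set.subset_union_right
    sup_le := fun s t u hs ht => show s.1 ∪ t.1 ⊆ u.1 from Set.union_subset hs ht }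

instance : OrderBot (S n) where
  bot := ⟨∅, gen_empty⟩
  bot_le s := show (∅ : Set (X n)) ⊆ s.1 from Set.empty_subset _

lemma le_iff {s t : S n} : s ≤ t ↔ s.1 ⊆ t.1 := Iff.rfl

lemma val_sup (s t : S n) : (s ⊔ t).1 = s.1 ∪ t.1 := rfl

lemma val_bot : ((⊥ : S n)).1 = (∅ : Set (X n)) := rfl

/-- The contact relation: overlap, or one side contains `a` and the other contains `b`. -/
def δ : S n → S n → Prop := fun s t =>
  (s.1 ∩ t.1).Nonempty ∨ (A n ⊆ s.1 ∧ B n ⊆ t.1) ∨ (B n ⊆ s.1 ∧ A n ⊆ t.1)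

lemma mem_sup {m : ℕ} (g : Fin m → S n) (p : X n) :
    p ∈ (Finset.univ.sup g).1 ↔ ∃ i, p ∈ (g i).1 := by
  classical
  have key : ∀ (F : Finset (Fin m)), p ∈ (F.sup g).1 ↔ ∃ i ∈ F, p ∈ (g i).1 := by
    intro F
    induction F using Finset.induction_on with
    | empty =>
      constructor
      · intro h; exact absurd h (Set.notMem_empty p)
      · rintro ⟨i, hi, -⟩; exact absurd hi (Finset.notMem_empty i)
    | @insert a F ha ih =>
      rw [Finset.sup_insert]
      have hval : ((g a ⊔ F.sup g)).1 = (g a).1 ∪ (F.sup g).1 := rfl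
      constructor
      · intro h
        rw [hval] at h
        rcases h with h | h
        · exact ⟨a, Finset.mem_insert_self _ _, h⟩
        · obtain ⟨i, hi, h⟩ := ih.mp h
          exact ⟨i, Finset.mem_insert_of_mem hi, h⟩
      · rintro ⟨i, hi, h⟩
        rw [hval]
        rcases Finset.mem_insert.mp hi with rfl | hi
        · exact Or.inl h
        · exact Or.inr (ih.mpr ⟨i, hi, h⟩)
  constructor
  · intro h
    obtain ⟨i, -, h⟩ := (key Finset.univ).mp h
    exact ⟨i, h⟩
  · rintro ⟨i, h⟩
    exact (key Finset.univ).mpr ⟨i, Finset.mem_univ i, h⟩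

lemma exists_avoid {m : ℕ} (c : Fin m → Bool → S n)
    (hd : ∀ i, ¬ δ (c i false) (c i true)) (p : X n) :
    ∃ f : Fin m → Bool, ∀ i, p ∉ (c i (f i)).1 := by
  classical
  refine ⟨fun i => if p ∈ (c i false).1 then true else false, fun i => ?_⟩
  intro hmem
  have hmem' : p ∈ (c i (if p ∈ (c i false).1 then true else false)).1 := hmem
  by_cases h : p ∈ (c i false).1
  · rw [if_pos h] at hmem'
    exact hd i (Or.inl ⟨p, h, hmem'⟩)
  · rw [if_neg h] at hmem'
    exact h hmem'

lemma nontrivial_fin (hn : 2 ≤ n) : Nontrivial (Fin n) :=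
  ⟨⟨⟨0, by omega⟩, ⟨1, by omega⟩, by simp [Fin.ext_iff]⟩⟩

/-- Key combinatorial lemma: a non-contact pair with `x` on one side and `yⱼ, y_{j'}`
(for distinct `j ≠ j'`) on the other side is impossible. -/
lemma aux_block (hn : 2 ≤ n) {s t : S n}
    (hov : ∀ p, p ∈ s.1 → p ∈ t.1 → False)
    (hsp : ¬(A n ⊆ s.1 ∧ B n ⊆ t.1)) {j j' : Fin n} (hjj : j ≠ j')
    (hxs : Sum.inr true ∈ s.1) (hjt : Sum.inl j ∈ t.1) (hj't : Sum.inl j' ∈ t.1) : False := by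
  haveI := nontrivial_fin hn
  obtain ⟨g, hg, hgt, hmem⟩ := t.2 (Sum.inl j) hjt
  rcases hg with rfl | rfl | ⟨i, rfl⟩ | ⟨i, rfl⟩
  · -- g = A : impossible, inl j ∉ A
    simp [A] at hmem
  · -- g = B ⊆ t
    obtain ⟨g', hg', hgs, hmem'⟩ := s.2 (Sum.inr true) hxs
    rcases hg' with rfl | rfl | ⟨i, rfl⟩ | ⟨i, rfl⟩
    · exact hsp ⟨hgs, hgt⟩
    · simp [B] at hmem'
    · simp [C0] at hmem'
    · -- C1 i ⊆ s; pick l ≠ i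
      obtain ⟨l, hl⟩ := exists_ne i
      have hls : Sum.inl l ∈ s.1 := hgs (Or.inr ⟨l, hl, rfl⟩)
      have hlt : Sum.inl l ∈ t.1 := hgt ⟨l, rfl⟩
      exact hov _ hls hlt
  · -- g = C0 i with inl j ∈ C0 i, so i = j and z ∈ t
    have hij : i = j := by
      rcases hmem with h | h
      · exact (Sum.inl.inj h).symm
      · simp at h
    subst hij
    have hzt : Sum.inr false ∈ t.1 := hgt (Or.inr rfl)
    obtain ⟨g', hg', hgs, hmem'⟩ := s.2 (Sum.inr true) hxs
    rcases hg' with rfl | rfl | ⟨k, rfl⟩ | ⟨k, rfl⟩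
    · -- A ⊆ s, so z ∈ s ∩ t
      exact hov _ (hgs (Or.inr rfl)) hzt
    · simp [B] at hmem'
    · simp [C0] at hmem'
    · -- C1 k ⊆ s
      by_cases hki : k = i
      · subst hki
        have : Sum.inl j' ∈ s.1 := hgs (Or.inr ⟨j', Ne.symm hjj, rfl⟩)
        exact hov _ this hj't
      · have : Sum.inl i ∈ s.1 := hgs (Or.inr ⟨i, fun h => hki h.symm, rfl⟩)
        exact hov _ this hjt
  · -- g = C1 i with inl j ∈ C1 i, so x ∈ t, contradiction with x ∈ s
    have hxt : Sum.inr true ∈ t.1 := hgt (Or.inl rfl)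
    exact hov _ hxs hxt

/-- Each non-contact pair "blocks" at most one index `j`. -/
lemma block_unique (hn : 2 ≤ n) {s t : S n} (hst : ¬ δ s t) {j j' : Fin n} (hjj : j ≠ j')
    (hbj : (Sum.inr true ∈ s.1 ∨ Sum.inl j ∈ s.1) ∧
           (Sum.inr true ∈ t.1 ∨ Sum.inl j ∈ t.1))
    (hbj' : (Sum.inr true ∈ s.1 ∨ Sum.inl j' ∈ s.1) ∧
            (Sum.inr true ∈ t.1 ∨ Sum.inl j' ∈ t.1)) : False := by
  have hov : ∀ p, p ∈ s.1 → p ∈ t.1 → False := fun p h1 h2 => hst (Or.inl ⟨p, h1, h2⟩)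
  have hsp1 : ¬(A n ⊆ s.1 ∧ B n ⊆ t.1) := fun h => hst (Or.inr (Or.inl h))
  have hsp2 : ¬(B n ⊆ s.1 ∧ A n ⊆ t.1) := fun h => hst (Or.inr (Or.inr h))
  rcases hbj.1 with hxs | hjs
  · -- x ∈ s
    have hjt : Sum.inl j ∈ t.1 := by
      rcases hbj.2 with hxt | h
      · exact absurd hxt (fun hxt => hov _ hxs hxt)
      · exact h
    have hj't : Sum.inl j' ∈ t.1 := by
      rcases hbj'.2 with hxt | h
      · exact absurd hxt (fun hxt => hov _ hxs hxt)
      · exact h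
    exact aux_block hn hov hsp1 hjj hxs hjt hj't
  · -- inl j ∈ s, hence x ∈ t
    have hxt : Sum.inr true ∈ t.1 := by
      rcases hbj.2 with hxt | hjt
      · exact hxt
      · exact absurd hjt (fun hjt => hov _ hjs hjt)
    have hj's : Sum.inl j' ∈ s.1 := by
      rcases hbj'.1 with hxs | h
      · exact absurd hxs (fun hxs => hov _ hxs hxt)
      · exact h
    exact aux_block hn (fun p h1 h2 => hov p h2 h1)
      (fun h => hsp2 ⟨h.2, h.1⟩) hjj hxt hjs hj's

lemma exists_unblocked {m : ℕ} (hmn : m < n) (bl : Fin m → Fin n → Prop)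
    (huniq : ∀ i j j', bl i j → bl i j' → j = j') :
    ∃ j, ∀ i, ¬ bl i j := by
  by_contra h
  push_neg at h
  choose u hu using h
  have hinj : Function.Injective u := fun j j' he => huniq _ _ _ (hu j) (he ▸ hu j')
  have hcard := Fintype.card_le_of_injective u hinj
  simp [Fintype.card_fin] at hcard
  omega

end Stmt8Aux

open Stmt8Aux

theorem stmt8 (n : ℕ) (hn : 2 ≤ n) :
    ∃ (S : Type) (_ : SemilatticeSup S) (_ : OrderBot S) (δ : S → S → Prop),
      IsWeakContact δ ∧
      CondD1plus δ ∧
      (∀ m : ℕ, 0 < m → m < n → CondD2 m δ) ∧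
      ¬ CondD2 n δ := by
  classical
  haveI := nontrivial_fin (n := n) hn
  have hn0 : 0 < n := by omega
  refine ⟨Stmt8Aux.S n, inferInstance, inferInstance, Stmt8Aux.δ, ?_, ?_, ?_, ?_⟩
  · -- IsWeakContact
    have ne_bot : ∀ (s : Stmt8Aux.S n) (p : X n), p ∈ s.1 → s ≠ ⊥ := by
      intro s p hp he
      rw [he] at hp
      exact Set.notMem_empty p hp
    refine ⟨?_, ?_, ?_, ?_⟩
    · rintro s t (⟨p, hps, hpt⟩ | ⟨h1, h2⟩ | ⟨h1, h2⟩)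
      · exact ⟨ne_bot s p hps, ne_bot t p hpt⟩
      · exact ⟨ne_bot s _ (h1 (Or.inl rfl)), ne_bot t _ (h2 ⟨⟨0, hn0⟩, rfl⟩)⟩
      · exact ⟨ne_bot s _ (h1 ⟨⟨0, hn0⟩, rfl⟩), ne_bot t _ (h2 (Or.inl rfl))⟩
    · intro s hs
      rcases Set.eq_empty_or_nonempty s.1 with he | ⟨p, hp⟩
      · exact absurd (Subtype.ext he) hs
      · exact Or.inl ⟨p, hp, hp⟩
    · rintro s t (⟨p, h1, h2⟩ | ⟨h1, h2⟩ | ⟨h1, h2⟩)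
      · exact Or.inl ⟨p, h2, h1⟩
      · exact Or.inr (Or.inr ⟨h2, h1⟩)
      · exact Or.inr (Or.inl ⟨h2, h1⟩)
    · rintro s t s₁ t₁ (⟨p, h1, h2⟩ | ⟨h1, h2⟩ | ⟨h1, h2⟩) hss hts
      · exact Or.inl ⟨p, hss h1, hts h2⟩
      · exact Or.inr (Or.inl ⟨h1.trans hss, h2.trans hts⟩)
      · exact Or.inr (Or.inr ⟨h1.trans hss, h2.trans hts⟩)
  · -- CondD1plus
    intro m hm a b c hnc hle
    intro p hp
    obtain ⟨f, hf⟩ := exists_avoid c hnc p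
    have h2 : p ∈ a.1 ∪ (Finset.univ.sup (fun i => c i (f i))).1 := hle f hp
    rcases h2 with h | h
    · exact h
    · obtain ⟨i, hi⟩ := (mem_sup _ p).mp h
      exact absurd hi (hf i)
  · -- CondD2 m for m < n
    intro m hm hmn a b c hnc hcov hδ
    rcases hδ with ⟨p, hpb, hpa⟩ | hsp
    · -- overlap case
      obtain ⟨f, hf⟩ := exists_avoid c hnc p
      rcases hcov f with h | h
      · obtain ⟨i, hi⟩ := (mem_sup _ p).mp (h hpb)
        exact hf i hi
      · obtain ⟨i, hi⟩ := (mem_sup _ p).mp (h hpa)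
        exact hf i hi
    · -- special case
      set bl : Fin m → Fin n → Prop := fun i j =>
        (Sum.inr true ∈ (c i false).1 ∨ Sum.inl j ∈ (c i false).1) ∧
        (Sum.inr true ∈ (c i true).1 ∨ Sum.inl j ∈ (c i true).1) with hbl
      have huniq : ∀ i j j', bl i j → bl i j' → j = j' := by
        intro i j j' h1 h2
        by_contra hne
        exact block_unique hn (hnc i) hne h1 h2
      obtain ⟨j, hj⟩ := exists_unblocked hmn bl huniq
      have hside : ∀ i, ∃ ε, Sum.inr true ∉ (c i ε).1 ∧ Sum.inl j ∉ (c i ε).1 := by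
        intro i
        have h := hj i
        rw [hbl] at h
        rcases not_and_or.mp h with h | h
        · exact ⟨false, (not_or.mp h).1, (not_or.mp h).2⟩
        · exact ⟨true, (not_or.mp h).1, (not_or.mp h).2⟩
      choose f hfx hfy using hside
      have hx : Sum.inr true ∉ (Finset.univ.sup (fun i => c i (f i))).1 := by
        intro h
        obtain ⟨i, hi⟩ := (mem_sup _ _).mp h
        exact hfx i hi
      have hy : Sum.inl j ∉ (Finset.univ.sup (fun i => c i (f i))).1 := by
        intro h
        obtain ⟨i, hi⟩ := (mem_sup _ _).mp h
        exact hfy i hi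
      rcases hcov f with h | h
      · rcases hsp with ⟨hAb, hBa⟩ | ⟨hBb, hAa⟩
        · exact hx (h (hAb (Or.inl rfl)))
        · exact hy (h (hBb ⟨j, rfl⟩))
      · rcases hsp with ⟨hAb, hBa⟩ | ⟨hBb, hAa⟩
        · exact hy (h (hBa ⟨j, rfl⟩))
        · exact hx (h (hAa (Or.inl rfl)))
  · -- ¬ CondD2 n
    intro hD2
    set aS : Stmt8Aux.S n := ⟨A n, gen_of_isGen (Or.inl rfl)⟩ with haS
    set bS : Stmt8Aux.S n := ⟨B n, gen_of_isGen (Or.inr (Or.inl rfl))⟩ with hbS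
    set c : Fin n → Bool → Stmt8Aux.S n := fun i ε =>
      match ε with
      | true => ⟨C1 n i, gen_of_isGen (Or.inr (Or.inr (Or.inr ⟨i, rfl⟩)))⟩
      | false => ⟨C0 n i, gen_of_isGen (Or.inr (Or.inr (Or.inl ⟨i, rfl⟩)))⟩ with hc
    have hnc : ∀ i, ¬ Stmt8Aux.δ (c i false) (c i true) := by
      intro i h
      rcases h with ⟨p, h0, h1⟩ | ⟨h2, h3⟩ | ⟨h2, h3⟩
      · -- C0 i and C1 i are disjoint
        rcases h0 with rfl | rfl
        · rcases h1 with h | ⟨k, hk, he⟩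
          · simp at h
          · exact hk (Sum.inl.inj he).symm
        · rcases h1 with h | ⟨k, hk, he⟩
          · simp at h
          · simp at he
      · -- A ⊆ C0 i : x ∈ C0 i impossible
        have := h2 (show Sum.inr true ∈ A n from Or.inl rfl)
        rcases this with h | h <;> simp at h
      · -- B ⊆ C0 i : take k ≠ i
        obtain ⟨k, hk⟩ := exists_ne (i : Fin n)
        have := h2 (show Sum.inl k ∈ B n from ⟨k, rfl⟩)
        rcases this with h | h
        · exact hk (Sum.inl.inj h)
        · simp at h
    have hcov : ∀ f : Fin n → Bool,
        bS ≤ Finset.univ.sup (fun i => c i (f i)) ∨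
        aS ≤ Finset.univ.sup (fun i => c i (f i)) := by
      intro f
      by_cases hT : ∃ i, f i = true
      · by_cases hF : ∃ i, f i = false
        · -- a ≤ σ_f
          right
          intro p hp
          rcases hp with rfl | rfl
          · obtain ⟨i₁, hi₁⟩ := hT
            refine (mem_sup _ _).mpr ⟨i₁, ?_⟩
            rw [hi₁]
            exact Or.inl rfl
          · obtain ⟨i₀, hi₀⟩ := hF
            refine (mem_sup _ _).mpr ⟨i₀, ?_⟩
            rw [hi₀]
            exact Or.inr rfl
        · -- f ≡ true : b ≤ σ_f
          left
          rintro p ⟨i, rfl⟩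
          obtain ⟨k, hk⟩ := exists_ne (i : Fin n)
          have hfk : f k = true := by
            rcases Bool.eq_false_or_eq_true (f k) with h | h
            · exact h
            · exact absurd ⟨k, h⟩ hF
          refine (mem_sup _ _).mpr ⟨k, ?_⟩
          rw [hfk]
          exact Or.inr ⟨i, Ne.symm hk, rfl⟩
      · -- f ≡ false : b ≤ σ_f
        left
        rintro p ⟨i, rfl⟩
        have hfi : f i = false := by
          rcases Bool.eq_false_or_eq_true (f i) with h | h
          · exact absurd ⟨i, h⟩ hT
          · exact h
        refine (mem_sup _ _).mpr ⟨i, ?_⟩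
        rw [hfi]
        exact Or.inl rfl
    have hba : Stmt8Aux.δ bS aS :=
      Or.inr (Or.inr ⟨subset_rfl, subset_rfl⟩)
    exact hD2 aS bS c hnc hcov hba
end

section
/- Let B be a Boolean algebra, let n be a positive integer, and let c_1, …, c_n ∈ B. Write c_{i,0} = c_i and c_{i,1} = c_iᶜ. Define b̄ = ⨅ { c_{1,f(1)} ⊔ ⋯ ⊔ c_{n,f(n)} : f : {1,…,n} → {0,1}, f(1) + ⋯ + f(n) even } and ā = ⨅ { c_{1,f(1)} ⊔ ⋯ ⊔ c_{n,f(n)} : f : {1,…,n} → {0,1}, f(1) + ⋯ + f(n) odd }. Then b̄ ⊓ ā = 0 and b̄ ⊔ ā = 1; that is, b̄ is the complement of ā in B. Consequently, if n is odd then b̄ = ⨆ { c_{1,f(1)} ⊓ ⋯ ⊓ c_{n,f(n)} : f with f(1) + ⋯ + f(n) even } and ā = ⨆ { c_{1,f(1)} ⊓ ⋯ ⊓ c_{n,f(n)} : f with f(1) + ⋯ + f(n) odd }, and conversely (with even and odd exchanged) if n is even. -/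
open Finset

-- sup of all minterms is ⊤
lemma aux_top {B : Type*} [BooleanAlgebra B] {n : ℕ} (cc : Fin n → Bool → B)
    (h : ∀ i, cc i false ⊔ cc i true = ⊤) :
    (Finset.univ : Finset (Fin n → Bool)).sup
      (fun g => Finset.univ.inf fun i => cc i (g i)) = ⊤ := by
  suffices H : ∀ s : Finset (Fin n),
      (Finset.univ : Finset (Fin n → Bool)).sup (fun g => s.inf fun i => cc i (g i)) = ⊤ from
    H Finset.univ
  intro s
  induction s using Finset.induction with
  | empty =>
      simp only [Finset.inf_empty]
      exact Finset.sup_const ⟨fun _ => false, Finset.mem_univ _⟩ ⊤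
  | @insert j s hj ih =>
      apply le_antisymm le_top
      rw [← ih]
      apply Finset.sup_le
      intro g _
      have hupd : ∀ b, s.inf (fun i => cc i (Function.update g j b i))
          = s.inf fun i => cc i (g i) := by
        intro b
        apply Finset.inf_congr rfl
        intro i hi
        rw [Function.update_of_ne (ne_of_mem_of_not_mem hi hj)]
      have h1 : ((insert j s).inf fun i => cc i (Function.update g j false i)) ⊔
          ((insert j s).inf fun i => cc i (Function.update g j true i))
          = s.inf fun i => cc i (g i) := by
        rw [Finset.inf_insert, Finset.inf_insert, hupd, hupd,
          Function.update_self, Function.update_self,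
          ← inf_sup_right (cc j false) (cc j true) (s.inf fun i => cc i (g i)), h j,
          top_inf_eq _]
      rw [← h1]
      exact sup_le
        (Finset.le_sup (f := fun g : Fin n → Bool => (insert j s).inf fun i => cc i (g i))
          (Finset.mem_univ (Function.update g j false)))
        (Finset.le_sup (f := fun g : Fin n → Bool => (insert j s).inf fun i => cc i (g i))
          (Finset.mem_univ (Function.update g j true)))

-- distinct minterms are disjoint
lemma aux_disj {B : Type*} [BooleanAlgebra B] {n : ℕ} (cc : Fin n → Bool → B)
    (h : ∀ i, cc i false ⊓ cc i true = ⊥) {g g' : Fin n → Bool} (hgg : g ≠ g') :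
    (Finset.univ.inf fun i => cc i (g i)) ⊓ (Finset.univ.inf fun i => cc i (g' i)) = ⊥ := by
  obtain ⟨i, hi⟩ := Function.ne_iff.mp hgg
  apply le_bot_iff.mp
  calc (Finset.univ.inf fun i => cc i (g i)) ⊓ (Finset.univ.inf fun i => cc i (g' i))
      ≤ cc i (g i) ⊓ cc i (g' i) :=
        inf_le_inf (Finset.inf_le (Finset.mem_univ _)) (Finset.inf_le (Finset.mem_univ _))
    _ ≤ ⊥ := by
        cases hb : g i <;> cases hb' : g' i
        · simp [hb, hb'] at hi
        · exact (h i).le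
        · rw [inf_comm]; exact (h i).le
        · simp [hb, hb'] at hi

lemma aux_reindex {B : Type*} [SemilatticeSup B] [OrderBot B] {n : ℕ}
    (T : (Fin n → Bool) → B) (p q : (Fin n → Bool) → Prop)
    [DecidablePred p] [DecidablePred q]
    (h : ∀ f, p f ↔ q (fun i => !(f i))) :
    (Finset.univ.filter p).sup (fun f => T fun i => !(f i))
      = (Finset.univ.filter q).sup T := by
  have himg : (Finset.univ.filter p).image (fun f i => !(f i)) = Finset.univ.filter q := by
    ext g
    simp only [Finset.mem_image, Finset.mem_filter, Finset.mem_univ, true_and]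
    constructor
    · rintro ⟨f, hf, rfl⟩; exact (h f).mp hf
    · intro hq
      refine ⟨fun i => !(g i), ?_, by funext i; exact Bool.not_not _⟩
      rw [h]
      show q fun i => !(!(g i))
      simp only [Bool.not_not]
      exact hq
  rw [← himg, Finset.sup_image]
  rfl

theorem stmt9 {B : Type*} [BooleanAlgebra B] (n : ℕ) (hn : 0 < n) (c : Fin n → B)
    (cc : Fin n → Bool → B)
    (hcc0 : ∀ i, cc i false = c i) (hcc1 : ∀ i, cc i true = (c i)ᶜ)
    (bbar abar : B)
    (hbbar : bbar =
      (Finset.univ.filter fun f : Fin n → Bool => Even (∑ i, (f i).toNat)).inf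
        (fun f => Finset.univ.sup fun i => cc i (f i)))
    (habar : abar =
      (Finset.univ.filter fun f : Fin n → Bool => Odd (∑ i, (f i).toNat)).inf
        (fun f => Finset.univ.sup fun i => cc i (f i))) :
    bbar ⊓ abar = ⊥ ∧ bbar ⊔ abar = ⊤ ∧ bbar = abarᶜ ∧
    (Odd n →
      bbar = (Finset.univ.filter fun f : Fin n → Bool => Even (∑ i, (f i).toNat)).sup
        (fun f => Finset.univ.inf fun i => cc i (f i)) ∧
      abar = (Finset.univ.filter fun f : Fin n → Bool => Odd (∑ i, (f i).toNat)).sup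
        (fun f => Finset.univ.inf fun i => cc i (f i))) ∧
    (Even n →
      bbar = (Finset.univ.filter fun f : Fin n → Bool => Odd (∑ i, (f i).toNat)).sup
        (fun f => Finset.univ.inf fun i => cc i (f i)) ∧
      abar = (Finset.univ.filter fun f : Fin n → Bool => Even (∑ i, (f i).toNat)).sup
        (fun f => Finset.univ.inf fun i => cc i (f i))) := by
  set T : (Fin n → Bool) → B := fun g => Finset.univ.inf fun i => cc i (g i) with hT
  set Deven := (Finset.univ.filter fun g : Fin n → Bool => Even (∑ i, (g i).toNat)).sup T
    with hDe
  set Dodd := (Finset.univ.filter fun g : Fin n → Bool => Odd (∑ i, (g i).toNat)).sup T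
    with hDo
  have hccsup : ∀ i, cc i false ⊔ cc i true = ⊤ := by
    intro i; rw [hcc0, hcc1, sup_compl_eq_top]
  have hccinf : ∀ i, cc i false ⊓ cc i true = ⊥ := by
    intro i; rw [hcc0, hcc1, inf_compl_eq_bot]
  -- codisjoint
  have hsupDD : Deven ⊔ Dodd = ⊤ := by
    rw [hDe, hDo, ← Finset.sup_union]
    have : (Finset.univ.filter fun g : Fin n → Bool => Odd (∑ i, (g i).toNat))
        = Finset.univ.filter fun g : Fin n → Bool => ¬ Even (∑ i, (g i).toNat) := by
      apply Finset.filter_congr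
      intro g _
      exact Nat.not_even_iff_odd.symm
    rw [this, Finset.filter_union_filter_not_eq]
    exact aux_top cc hccsup
  -- disjoint
  have hinfDD : Deven ⊓ Dodd = ⊥ := by
    apply le_bot_iff.mp
    rw [hDe, Finset.sup_inf_distrib_right]
    apply Finset.sup_le
    intro g hg
    rw [hDo, Finset.sup_inf_distrib_left]
    apply Finset.sup_le
    intro g' hg'
    simp only [Finset.mem_filter] at hg hg'
    have hne : g ≠ g' := by
      rintro rfl
      exact (Nat.not_even_iff_odd.mpr hg'.2) hg.2
    exact (aux_disj cc hccinf hne).le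
  have hic : IsCompl Deven Dodd := ⟨disjoint_iff.mpr hinfDD, codisjoint_iff.mpr hsupDD⟩
  have hDoc : Dodd = Devenᶜ := hic.symm.eq_compl
  have hDec : Deven = Doddᶜ := hic.eq_compl
  -- complement of each clause
  have hScompl : ∀ f : Fin n → Bool,
      (Finset.univ.sup fun i => cc i (f i))ᶜ = T fun i => !(f i) := by
    intro f
    rw [Finset.compl_sup, hT]
    apply Finset.inf_congr rfl
    intro i _
    cases hb : f i <;> simp [hcc0, hcc1, hb]
  have hsum : ∀ f : Fin n → Bool,
      (∑ i, (!(f i)).toNat) + ∑ i, (f i).toNat = n := by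
    intro f
    rw [← Finset.sum_add_distrib]
    have : ∀ i : Fin n, (!(f i)).toNat + (f i).toNat = 1 := by
      intro i; cases f i <;> simp
    simp [this]
  -- complements of bbar and abar
  have hbbarc : bbar ᶜ = (Finset.univ.filter fun f : Fin n → Bool =>
      Even (∑ i, (f i).toNat)).sup fun f => T fun i => !(f i) := by
    rw [hbbar, Finset.compl_inf]
    exact Finset.sup_congr rfl fun f _ => hScompl f
  have habarc : abar ᶜ = (Finset.univ.filter fun f : Fin n → Bool =>
      Odd (∑ i, (f i).toNat)).sup fun f => T fun i => !(f i) := by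
    rw [habar, Finset.compl_inf]
    exact Finset.sup_congr rfl fun f _ => hScompl f
  rcases Nat.even_or_odd n with hne | hno
  · -- n even
    have hb : bbar ᶜ = Deven := by
      rw [hbbarc, hDe]
      apply aux_reindex
      intro f
      have h1 : (∑ i, ((fun i => !(f i)) i).toNat) + ∑ i, (f i).toNat = n := hsum f
      have h2 := hne
      rw [Nat.even_iff] at h2 ⊢
      rw [Nat.even_iff]
      omega
    have ha : abar ᶜ = Dodd := by
      rw [habarc, hDo]
      apply aux_reindex
      intro f
      have h1 : (∑ i, ((fun i => !(f i)) i).toNat) + ∑ i, (f i).toNat = n := hsum f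
      have h2 := hne
      rw [Nat.even_iff] at h2
      rw [Nat.odd_iff, Nat.odd_iff]
      omega
    have hbb : bbar = Dodd := by
      rw [← compl_compl bbar, hb, ← hDoc]
    have haa : abar = Deven := by
      rw [← compl_compl abar, ha, ← hDec]
    refine ⟨?_, ?_, ?_, ?_, ?_⟩
    · rw [hbb, haa, inf_comm]; exact hinfDD
    · rw [hbb, haa, sup_comm]; exact hsupDD
    · rw [hbb, haa]; exact hDoc
    · intro hodd; exact absurd hne (Nat.not_even_iff_odd.mpr hodd)
    · intro _; exact ⟨hbb, haa⟩
  · -- n odd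
    have hb : bbar ᶜ = Dodd := by
      rw [hbbarc, hDo]
      apply aux_reindex
      intro f
      have h1 : (∑ i, ((fun i => !(f i)) i).toNat) + ∑ i, (f i).toNat = n := hsum f
      have h2 := hno
      rw [Nat.odd_iff] at h2 ⊢
      rw [Nat.even_iff]
      omega
    have ha : abar ᶜ = Deven := by
      rw [habarc, hDe]
      apply aux_reindex
      intro f
      have h1 : (∑ i, ((fun i => !(f i)) i).toNat) + ∑ i, (f i).toNat = n := hsum f
      have h2 := hno
      rw [Nat.odd_iff] at h2
      rw [Nat.odd_iff, Nat.even_iff]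
      omega
    have hbb : bbar = Deven := by
      rw [← compl_compl bbar, hb, ← hDec]
    have haa : abar = Dodd := by
      rw [← compl_compl abar, ha, ← hDoc]
    refine ⟨?_, ?_, ?_, ?_, ?_⟩
    · rw [hbb, haa]; exact hinfDD
    · rw [hbb, haa]; exact hsupDD
    · rw [hbb, haa]; exact hDec
    · intro _; exact ⟨hbb, haa⟩
    · intro heven; exact absurd heven (Nat.not_even_iff_odd.mpr hno)
end

section
/- Let n ≥ 2 and realize the free Boolean algebra on n generators as the powerset of the set of functions Fin n → Bool, with generators c_{i,0} = { g : Fin n → Bool | g(i) = false } and their complements c_{i,1} = { g | g(i) = true } for i = 1, …, n. Define b̄ = ⋂ { c_{1,f(1)} ∪ ⋯ ∪ c_{n,f(n)} : f : {1,…,n} → {0,1} with f(1)+⋯+f(n) even } and ā = ⋂ { c_{1,f(1)} ∪ ⋯ ∪ c_{n,f(n)} : f with f(1)+⋯+f(n) odd }. Then the 2n + 2 elements c_{1,0}, …, c_{n,0}, c_{1,1}, …, c_{n,1}, ā, b̄ are pairwise incomparable under inclusion (no one is a subset of another, and they are pairwise distinct). -/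
theorem stmt10 (n : ℕ) (hn : 2 ≤ n)
    (cc : Fin n → Bool → Set (Fin n → Bool))
    (hcc : ∀ i b, cc i b = {g : Fin n → Bool | g i = b})
    (bbar abar : Set (Fin n → Bool))
    (hbbar : bbar =
      ⋂ (f : Fin n → Bool) (_ : Even (∑ i, (f i).toNat)), ⋃ i : Fin n, cc i (f i))
    (habar : abar =
      ⋂ (f : Fin n → Bool) (_ : Odd (∑ i, (f i).toNat)), ⋃ i : Fin n, cc i (f i))
    (e : (Fin n × Bool) ⊕ Bool → Set (Fin n → Bool))
    (he1 : ∀ i b, e (Sum.inl (i, b)) = cc i b)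
    (he2 : e (Sum.inr false) = abar) (he3 : e (Sum.inr true) = bbar) :
    ∀ p q : (Fin n × Bool) ⊕ Bool, p ≠ q → ¬ e p ⊆ e q := by
  -- characterization of membership in bbar
  have hb : ∀ g : Fin n → Bool, g ∈ bbar ↔ ¬ Even (∑ k, (!(g k)).toNat) := by
    intro g
    rw [hbbar]
    simp only [Set.mem_iInter, Set.mem_iUnion, hcc, Set.mem_setOf_eq]
    constructor
    · intro h he
      obtain ⟨i, hi⟩ := h (fun k => !(g k)) he
      simp at hi
    · intro h f hf
      by_contra hc
      push_neg at hc
      have hfe : f = fun k => !(g k) := by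
        funext i
        have := hc i
        cases hgi : g i <;> cases hfi : f i <;> simp_all
      rw [hfe] at hf
      exact h hf
  have ha : ∀ g : Fin n → Bool, g ∈ abar ↔ Even (∑ k, (!(g k)).toNat) := by
    intro g
    rw [habar]
    simp only [Set.mem_iInter, Set.mem_iUnion, hcc, Set.mem_setOf_eq]
    constructor
    · intro h
      by_contra he
      rw [Nat.not_even_iff_odd] at he
      obtain ⟨i, hi⟩ := h (fun k => !(g k)) he
      simp at hi
    · intro h f hf
      by_contra hc
      push_neg at hc
      have hfe : f = fun k => !(g k) := by
        funext i
        have := hc i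
        cases hgi : g i <;> cases hfi : f i <;> simp_all
      rw [hfe] at hf
      rw [← Nat.not_even_iff_odd] at hf
      exact hf h
  -- sum computation
  have hsum : ∀ (i j : Fin n), i ≠ j → ∀ b c : Bool,
      (∑ k, (!(if k = i then b else if k = j then c else true)).toNat)
        = (!b).toNat + (!c).toNat := by
    intro i j hij b c
    have hfun : ∀ k : Fin n, (!(if k = i then b else if k = j then c else true)).toNat
        = (if k = i then (!b).toNat else 0) + (if k = j then (!c).toNat else 0) := by
      intro k
      by_cases h1 : k = i <;> by_cases h2 : k = j <;> simp_all
    calc (∑ k, (!(if k = i then b else if k = j then c else true)).toNat)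
        = ∑ k, ((if k = i then (!b).toNat else 0) + (if k = j then (!c).toNat else 0)) :=
          Finset.sum_congr rfl (fun k _ => hfun k)
      _ = (!b).toNat + (!c).toNat := by
          rw [Finset.sum_add_distrib, Finset.sum_ite_eq', Finset.sum_ite_eq']
          simp
  -- existence of functions with prescribed value at i and prescribed parity
  have hex : ∀ (i : Fin n) (b : Bool),
      (∃ g : Fin n → Bool, g i = b ∧ Even (∑ k, (!(g k)).toNat)) ∧
      (∃ g : Fin n → Bool, g i = b ∧ ¬ Even (∑ k, (!(g k)).toNat)) := by
    intro i b
    have : Nontrivial (Fin n) := Fin.nontrivial_iff_two_le.mpr hn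
    obtain ⟨j, hj⟩ := exists_ne i
    have h1 := hsum i j (Ne.symm hj) b true
    have h2 := hsum i j (Ne.symm hj) b false
    by_cases hEA : Even ((!b).toNat)
    · refine ⟨⟨fun k => if k = i then b else if k = j then true else true, by simp [hj], ?_⟩,
        ⟨fun k => if k = i then b else if k = j then false else true, by simp [hj], ?_⟩⟩
      · rw [h1]; simpa using hEA
      · rw [h2]; simp [Nat.even_add_one, hEA]
    · refine ⟨⟨fun k => if k = i then b else if k = j then false else true, by simp [hj], ?_⟩,
        ⟨fun k => if k = i then b else if k = j then true else true, by simp [hj], ?_⟩⟩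
      · rw [h2]; simp [Nat.even_add_one, hEA]
      · rw [h1]; simpa using hEA
  rintro (⟨i, b⟩ | pb) (⟨j, b'⟩ | pb') hne hsub
  · -- cc i b ⊆ cc j b' impossible
    have hgp : (fun k => if k = j then !b' else b) ∈ e (Sum.inl (i, b)) := by
      rw [he1, hcc]
      by_cases hij : i = j
      · subst hij
        have hbb : b ≠ b' := fun h => hne (by rw [h])
        simp [Set.mem_setOf_eq]
        cases b <;> cases b' <;> simp_all
      · simp [Set.mem_setOf_eq, hij]
    have := hsub hgp
    rw [he1, hcc] at this
    simp [Set.mem_setOf_eq] at this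
  · -- cc i b ⊆ abar/bbar impossible
    obtain ⟨⟨g1, hg1, hg1e⟩, ⟨g2, hg2, hg2e⟩⟩ := hex i b
    cases pb'
    · -- target abar (Even)
      have : g2 ∈ e (Sum.inl (i, b)) := by rw [he1, hcc]; exact hg2
      have := hsub this
      rw [he2, ha] at this
      exact hg2e this
    · have : g1 ∈ e (Sum.inl (i, b)) := by rw [he1, hcc]; exact hg1
      have := hsub this
      rw [he3, hb] at this
      exact this hg1e
  · -- abar/bbar ⊆ cc j b' impossible
    obtain ⟨⟨g1, hg1, hg1e⟩, ⟨g2, hg2, hg2e⟩⟩ := hex j (!b')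
    cases pb
    · have hmem : g1 ∈ e (Sum.inr false) := by rw [he2, ha]; exact hg1e
      have := hsub hmem
      rw [he1, hcc] at this
      simp [Set.mem_setOf_eq] at this
      rw [this] at hg1
      simp at hg1
    · have hmem : g2 ∈ e (Sum.inr true) := by rw [he3, hb]; exact hg2e
      have := hsub hmem
      rw [he1, hcc] at this
      simp [Set.mem_setOf_eq] at this
      rw [this] at hg2
      simp at hg2
  · -- abar vs bbar
    obtain ⟨⟨g1, hg1, hg1e⟩, ⟨g2, hg2, hg2e⟩⟩ := hex ⟨0, by omega⟩ true
    cases pb <;> cases pb' <;> try exact hne rfl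
    · -- abar ⊆ bbar
      have hmem : g1 ∈ e (Sum.inr false) := by rw [he2, ha]; exact hg1e
      have := hsub hmem
      rw [he3, hb] at this
      exact this hg1e
    · -- bbar ⊆ abar
      have hmem : g2 ∈ e (Sum.inr true) := by rw [he3, hb]; exact hg2e
      have := hsub hmem
      rw [he2, ha] at this
      exact hg2e this
end

section
/- Let L be the first-order language with one binary function symbol +, one constant symbol 0, and one binary relation symbol δ. There is no L-sentence ψ (equivalently, no finite set of L-sentences) whose models are exactly the Ivanova Contact join-semilattices, i.e., the L-structures S in which + is a semilattice join with least element 0, δ is a weak contact relation, and S satisfies (D1) and (D2_n) for every positive integer n. -/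
open FirstOrder FirstOrder.Language

/-- Function symbols of the language of contact semilattices:
a constant `0` and a binary operation `+`. -/
inductive CSFunc : ℕ → Type
  | zero : CSFunc 0
  | plus : CSFunc 2

/-- Relation symbols of the language of contact semilattices:
a binary relation `δ`. -/
inductive CSRel : ℕ → Type
  | delta : CSRel 2

/-- The first-order language with a binary function symbol `+`, a constant `0`
and a binary relation symbol `δ`. -/
def csLang : FirstOrder.Language := ⟨CSFunc, CSRel⟩

section Interpretation

variable (M : Type) [csLang.Structure M]

/-- Interpretation of `+`. -/
def mAdd (a b : M) : M := Structure.funMap (L := csLang) CSFunc.plus ![a, b]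

/-- Interpretation of `0`. -/
def mZero : M := Structure.funMap (L := csLang) CSFunc.zero ![]

/-- Interpretation of `δ`. -/
def mDelta (a b : M) : Prop := Structure.RelMap (L := csLang) CSRel.delta ![a, b]

/-- The induced order: `a ≤ b` iff `a + b = b`. -/
def mLe (a b : M) : Prop := mAdd M a b = b

/-- Finite sums `c₁ + ⋯ + cₖ` (with value `0` for the empty list). -/
def mSum (l : List M) : M := l.foldr (mAdd M) (mZero M)

/-- `M` is an Ivanova Contact join-semilattice: `+` is a semilattice join with least
element `0`, `δ` is a weak contact relation, and (D1) and (D2_n) hold for every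
positive integer `n`. -/
def IsIvanova : Prop :=
  -- semilattice axioms
  (∀ a b c : M, mAdd M a (mAdd M b c) = mAdd M (mAdd M a b) c) ∧
  (∀ a b : M, mAdd M a b = mAdd M b a) ∧
  (∀ a : M, mAdd M a a = a) ∧
  -- 0 is a least element
  (∀ a : M, mAdd M (mZero M) a = a) ∧
  -- weak contact axioms
  (∀ a b : M, mDelta M a b → a ≠ mZero M ∧ b ≠ mZero M) ∧
  (∀ a : M, a ≠ mZero M → mDelta M a a) ∧
  (∀ a b : M, mDelta M a b → mDelta M b a) ∧
  (∀ a b a₁ b₁ : M, mDelta M a b → mLe M a a₁ → mLe M b b₁ → mDelta M a₁ b₁) ∧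
  -- (D1)
  (∀ a b c₀ c₁ : M, ¬ mDelta M c₀ c₁ →
    mLe M b (mAdd M a c₀) → mLe M b (mAdd M a c₁) → mLe M b a) ∧
  -- (D2_n) for every positive integer n
  (∀ n : ℕ, 0 < n → ∀ (a b : M) (c : Fin n → Bool → M),
    (∀ i, ¬ mDelta M (c i false) (c i true)) →
    (∀ f : Fin n → Bool,
      mLe M b (mSum M (List.ofFn fun i => c i (f i))) ∨
      mLe M a (mSum M (List.ofFn fun i => c i (f i)))) →
    ¬ mDelta M b a)

end Interpretation

namespace CSCounter

/-! ### The counterexample structures -/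

variable (N : ℕ)

/-- Points of the `N`-cube. -/
abbrev Pt := Fin N → Bool

/-- Number of `true` coordinates. -/
def cnt (x : Pt N) : ℕ := (Finset.univ.filter fun i => x i = true).card

/-- The set of "even" points. -/
def EvS : Set (Pt N) := {x | Even (cnt N x)}

/-- The set of "odd" points. -/
def OdS : Set (Pt N) := {x | ¬ Even (cnt N x)}

/-- The half-cube `{x | x i = b}`. -/
def halfS (i : Fin N) (b : Bool) : Set (Pt N) := {x | x i = b}

/-- The family of admissible sets: union closure of `∅`, the parity classes and
the halves. -/
inductive Fam : Set (Pt N) → Prop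
  | empty : Fam ∅
  | ev : Fam (EvS N)
  | od : Fam (OdS N)
  | half (i : Fin N) (b : Bool) : Fam (halfS N i b)
  | union {s t : Set (Pt N)} : Fam s → Fam t → Fam (s ∪ t)

/-- The contact relation: overlap, plus the pair `(EvS, OdS)` closed upwards. -/
def Del (s t : Set (Pt N)) : Prop :=
  (s ∩ t).Nonempty ∨ (EvS N ⊆ s ∧ OdS N ⊆ t) ∨ (OdS N ⊆ s ∧ EvS N ⊆ t)

/-- The carrier of the counterexample structure. -/
def CM := {s : Set (Pt N) // Fam N s}

instance : Nonempty (CM N) := ⟨⟨∅, Fam.empty⟩⟩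

instance cmStructure : csLang.Structure (CM N) where
  funMap {n} f v :=
    match f with
    | .zero => ⟨∅, Fam.empty⟩
    | .plus => ⟨(v 0).1 ∪ (v 1).1, Fam.union (v 0).2 (v 1).2⟩
  RelMap {n} r v :=
    match r with
    | .delta => Del N (v 0).1 (v 1).1

variable {N}

theorem cmAdd (a b : CM N) : mAdd (CM N) a b = ⟨a.1 ∪ b.1, Fam.union a.2 b.2⟩ := rfl

theorem cmZero : mZero (CM N) = ⟨∅, Fam.empty⟩ := rfl

theorem cmDelta (a b : CM N) : mDelta (CM N) a b ↔ Del N a.1 b.1 := Iff.rfl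

theorem cmLe (a b : CM N) : mLe (CM N) a b ↔ a.1 ⊆ b.1 := by
  rw [mLe, cmAdd]
  exact Subtype.ext_iff.trans Set.union_eq_right

theorem cmMemSum (l : List (CM N)) (x : Pt N) :
    x ∈ (mSum (CM N) l).1 ↔ ∃ s ∈ l, x ∈ s.1 := by
  induction l with
  | nil => simp [mSum, cmZero]; exact fun h => h
  | cons a l ih =>
      have : mSum (CM N) (a :: l) = mAdd (CM N) a (mSum (CM N) l) := rfl
      rw [this, cmAdd]
      simp only [Set.mem_union, List.mem_cons, ih]
      constructor
      · rintro (h | ⟨s, hs, hx⟩)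
        · exact ⟨a, Or.inl rfl, h⟩
        · exact ⟨s, Or.inr hs, hx⟩
      · rintro ⟨s, (rfl | hs), hx⟩
        · exact Or.inl hx
        · exact Or.inr ⟨s, hs, hx⟩

end CSCounter
namespace CSCounter

variable {N : ℕ}

/-! ### Special points -/

/-- The all-false point. -/
def pt0 : Pt N := fun _ => false

/-- The point that is true exactly at `m`. -/
def pt1 (m : Fin N) : Pt N := fun t => decide (t = m)

/-- The point that is true exactly at `j` and `j'`. -/
def pt2 (j j' : Fin N) : Pt N := fun t => decide (t = j) || decide (t = j')

theorem cnt_pt0 : cnt N (pt0 : Pt N) = 0 := by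
  simp [cnt, pt0]

theorem cnt_pt1 (m : Fin N) : cnt N (pt1 m) = 1 := by
  rw [cnt]
  convert Finset.card_singleton m
  ext t
  simp [pt1]

theorem cnt_pt2 {j j' : Fin N} (h : j ≠ j') : cnt N (pt2 j j') = 2 := by
  rw [cnt]
  have : (Finset.univ.filter fun i => pt2 j j' i = true) = {j, j'} := by
    ext t
    simp [pt2]
  rw [this, Finset.card_pair h]

theorem pt0_mem_ev : (pt0 : Pt N) ∈ EvS N := by simp [EvS, cnt_pt0]

theorem pt1_mem_od (m : Fin N) : pt1 m ∈ OdS N := by simp [OdS, cnt_pt1]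

theorem pt2_mem_ev {j j' : Fin N} (h : j ≠ j') : pt2 j j' ∈ EvS N := by
  simp [EvS, cnt_pt2 h]

theorem ev_inter_od : EvS N ∩ OdS N = ∅ := by
  ext x; simp [EvS, OdS]

theorem ev_nonempty : (EvS N).Nonempty := ⟨pt0, pt0_mem_ev⟩

/-- Another index different from `j`, when `2 ≤ N`. -/
theorem exists_ne (hN : 2 ≤ N) (j : Fin N) : ∃ j' : Fin N, j' ≠ j := by
  have : 1 < Fintype.card (Fin N) := by simp; omega
  exact Fintype.exists_ne_of_one_lt_card this j

theorem od_nonempty (hN : 2 ≤ N) : (OdS N).Nonempty := by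
  obtain ⟨j, -⟩ := exists_ne hN ⟨0, by omega⟩
  exact ⟨pt1 j, pt1_mem_od j⟩

/-- An even point in each half (needs `2 ≤ N`). -/
theorem ev_point_half (hN : 2 ≤ N) (j : Fin N) (b : Bool) :
    ∃ x ∈ EvS N, x ∈ halfS N j b := by
  cases b with
  | false => exact ⟨pt0, pt0_mem_ev, rfl⟩
  | true =>
      obtain ⟨j', hj'⟩ := exists_ne hN j
      refine ⟨pt2 j j', pt2_mem_ev (Ne.symm hj'), ?_⟩
      simp [halfS, pt2]

/-- An odd point in each half. -/
theorem od_point_half (hN : 2 ≤ N) (j : Fin N) (b : Bool) :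
    ∃ x ∈ OdS N, x ∈ halfS N j b := by
  cases b with
  | true => exact ⟨pt1 j, pt1_mem_od j, by simp [halfS, pt1]⟩
  | false =>
      obtain ⟨j', hj'⟩ := exists_ne hN j
      refine ⟨pt1 j', pt1_mem_od j', ?_⟩
      have hji : j ≠ j' := fun h => hj' h.symm
      simp [halfS, pt1, hji]

theorem ev_not_subset_half (hN : 2 ≤ N) (j : Fin N) (b : Bool) :
    ¬ EvS N ⊆ halfS N j b := by
  intro h
  obtain ⟨x, hx, hxh⟩ := ev_point_half hN j (!b)
  have := h hx
  simp only [halfS, Set.mem_setOf_eq] at this hxh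
  rw [this] at hxh
  simp at hxh

theorem od_not_subset_half (hN : 2 ≤ N) (j : Fin N) (b : Bool) :
    ¬ OdS N ⊆ halfS N j b := by
  intro h
  obtain ⟨x, hx, hxh⟩ := od_point_half hN j (!b)
  have := h hx
  simp only [halfS, Set.mem_setOf_eq] at this hxh
  rw [this] at hxh
  simp at hxh

/-! ### Structure theorem for the family -/

/-- Normal form of a family member. -/
def shape (T : Set (Fin N × Bool)) (u v : Prop) : Set (Pt N) :=
  {x | (∃ p ∈ T, x p.1 = p.2) ∨ (u ∧ x ∈ EvS N) ∨ (v ∧ x ∈ OdS N)}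

theorem fam_shape {s : Set (Pt N)} (hs : Fam N s) :
    ∃ (T : Set (Fin N × Bool)) (u v : Prop), s = shape T u v := by
  induction hs with
  | empty =>
      exact ⟨∅, False, False, by ext x; simp [shape]⟩
  | ev => exact ⟨∅, True, False, by ext x; simp [shape]⟩
  | od => exact ⟨∅, False, True, by ext x; simp [shape]⟩
  | half i b =>
      refine ⟨{(i, b)}, False, False, ?_⟩
      ext x; simp [shape, halfS]
  | union hs ht ihs iht =>
      obtain ⟨T, u, v, rfl⟩ := ihs
      obtain ⟨T', u', v', rfl⟩ := iht
      refine ⟨T ∪ T', u ∨ u', v ∨ v', ?_⟩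
      ext x
      simp only [shape, Set.mem_union, Set.mem_setOf_eq]
      constructor
      · rintro ((⟨p, hp, hxp⟩ | ⟨hu, hx⟩ | ⟨hv, hx⟩) | (⟨p, hp, hxp⟩ | ⟨hu, hx⟩ | ⟨hv, hx⟩))
        · exact Or.inl ⟨p, Or.inl hp, hxp⟩
        · exact Or.inr (Or.inl ⟨Or.inl hu, hx⟩)
        · exact Or.inr (Or.inr ⟨Or.inl hv, hx⟩)
        · exact Or.inl ⟨p, Or.inr hp, hxp⟩
        · exact Or.inr (Or.inl ⟨Or.inr hu, hx⟩)
        · exact Or.inr (Or.inr ⟨Or.inr hv, hx⟩)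
      · rintro (⟨p, (hp | hp), hxp⟩ | ⟨(hu | hu), hx⟩ | ⟨(hv | hv), hx⟩)
        · exact Or.inl (Or.inl ⟨p, hp, hxp⟩)
        · exact Or.inr (Or.inl ⟨p, hp, hxp⟩)
        · exact Or.inl (Or.inr (Or.inl ⟨hu, hx⟩))
        · exact Or.inr (Or.inr (Or.inl ⟨hu, hx⟩))
        · exact Or.inl (Or.inr (Or.inr ⟨hv, hx⟩))
        · exact Or.inr (Or.inr (Or.inr ⟨hv, hx⟩))

theorem half_subset_shape {T : Set (Fin N × Bool)} {u v : Prop} {p : Fin N × Bool}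
    (hp : p ∈ T) : halfS N p.1 p.2 ⊆ shape T u v :=
  fun x hx => Or.inl ⟨p, hp, hx⟩

/-- Two different halves always intersect; same halves too. -/
theorem halves_inter (hN : 2 ≤ N) (j : Fin N) (b : Bool) (j' : Fin N) (b' : Bool)
    (h : ¬ (j = j' ∧ b = !b')) : (halfS N j b ∩ halfS N j' b').Nonempty := by
  by_cases hjj : j = j'
  · subst hjj
    have hb : b = b' := by
      rcases h with h
      cases b <;> cases b' <;> simp_all
    subst hb
    obtain ⟨x, -, hx⟩ := ev_point_half hN j b
    exact ⟨x, hx, hx⟩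
  · refine ⟨fun t => if t = j then b else if t = j' then b' else false, ?_, ?_⟩
    · simp [halfS]
    · simp [halfS, Ne.symm hjj]

/-- A nonempty family member consisting of odd points is all of `OdS`. -/
theorem fam_sub_od (hN : 2 ≤ N) {d : Set (Pt N)} (hd : Fam N d)
    (hsub : d ⊆ OdS N) (hne : d.Nonempty) : OdS N ⊆ d := by
  obtain ⟨T, u, v, rfl⟩ := fam_shape hd
  have hT : T = ∅ := by
    by_contra hT
    obtain ⟨p, hp⟩ := Set.nonempty_iff_ne_empty.2 hT
    obtain ⟨x, hxev, hxh⟩ := ev_point_half hN p.1 p.2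
    have hxd : x ∈ shape T u v := half_subset_shape hp hxh
    exact (hsub hxd) hxev
  have hu : ¬ u := by
    intro hu
    have : (pt0 : Pt N) ∈ shape T u v := Or.inr (Or.inl ⟨hu, pt0_mem_ev⟩)
    exact (hsub this) pt0_mem_ev
  obtain ⟨x, hx⟩ := hne
  rcases hx with (⟨p, hp, -⟩ | ⟨hu', -⟩ | ⟨hv, -⟩)
  · rw [hT] at hp; exact absurd hp (Set.notMem_empty p)
  · exact absurd hu' hu
  · exact fun y hy => Or.inr (Or.inr ⟨hv, hy⟩)

/-- A nonempty family member consisting of even points is all of `EvS`. -/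
theorem fam_sub_ev (hN : 2 ≤ N) {d : Set (Pt N)} (hd : Fam N d)
    (hsub : d ⊆ EvS N) (hne : d.Nonempty) : EvS N ⊆ d := by
  obtain ⟨T, u, v, rfl⟩ := fam_shape hd
  have hT : T = ∅ := by
    by_contra hT
    obtain ⟨p, hp⟩ := Set.nonempty_iff_ne_empty.2 hT
    obtain ⟨x, hxod, hxh⟩ := od_point_half hN p.1 p.2
    exact hxod (hsub (half_subset_shape hp hxh))
  have hv : ¬ v := by
    intro hv
    obtain ⟨x, hxod⟩ := od_nonempty hN
    have : x ∈ shape T u v := Or.inr (Or.inr ⟨hv, hxod⟩)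
    exact hxod (hsub this)
  obtain ⟨x, hx⟩ := hne
  rcases hx with (⟨p, hp, -⟩ | ⟨hu, -⟩ | ⟨hv', -⟩)
  · rw [hT] at hp; exact absurd hp (Set.notMem_empty p)
  · exact fun y hy => Or.inr (Or.inl ⟨hu, hy⟩)
  · exact absurd hv' hv

/-- Key separation lemma: two disjoint nonempty family members with no
pair-containment must be a pair of opposite halves. -/
theorem sep_lemma (hN : 2 ≤ N) {c c' : Set (Pt N)} (hc : Fam N c) (hc' : Fam N c')
    (hdisj : ¬ (c ∩ c').Nonempty) (hne : c.Nonempty) (hne' : c'.Nonempty)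
    (hp1 : ¬ (EvS N ⊆ c ∧ OdS N ⊆ c')) (hp2 : ¬ (OdS N ⊆ c ∧ EvS N ⊆ c')) :
    ∃ (j : Fin N) (b : Bool), c = halfS N j b ∧ c' = halfS N j (!b) := by
  rw [Set.not_nonempty_iff_eq_empty] at hdisj
  have clash : ∀ x, x ∈ c → x ∈ c' → False := by
    intro x h1 h2
    have : x ∈ c ∩ c' := ⟨h1, h2⟩
    rw [hdisj] at this; exact this
  -- no parity class is contained in either side
  have hnEvc : ¬ EvS N ⊆ c := by
    intro h
    have hsub : c' ⊆ OdS N := by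
      intro x hx
      by_contra hxod
      have hxev : x ∈ EvS N := not_not.mp hxod
      exact clash x (h hxev) hx
    exact hp1 ⟨h, fam_sub_od hN hc' hsub hne'⟩
  have hnOdc : ¬ OdS N ⊆ c := by
    intro h
    have hsub : c' ⊆ EvS N := by
      intro x hx
      by_contra hxev
      have hxod : x ∈ OdS N := hxev
      exact clash x (h hxod) hx
    exact hp2 ⟨h, fam_sub_ev hN hc' hsub hne'⟩
  have hnEvc' : ¬ EvS N ⊆ c' := by
    intro h
    have hsub : c ⊆ OdS N := by
      intro x hx
      by_contra hxod
      exact clash x hx (h (not_not.mp hxod))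
    exact hp2 ⟨fam_sub_od hN hc hsub hne, h⟩
  have hnOdc' : ¬ OdS N ⊆ c' := by
    intro h
    have hsub : c ⊆ EvS N := by
      intro x hx
      by_contra hxev
      exact clash x hx (h hxev)
    exact hp1 ⟨fam_sub_ev hN hc hsub hne, h⟩
  obtain ⟨T, u, v, rfl⟩ := fam_shape hc
  obtain ⟨T', u', v', rfl⟩ := fam_shape hc'
  have hu : ¬ u := fun hu => hnEvc (fun x hx => Or.inr (Or.inl ⟨hu, hx⟩))
  have hv : ¬ v := fun hv => hnOdc (fun x hx => Or.inr (Or.inr ⟨hv, hx⟩))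
  have hu' : ¬ u' := fun h => hnEvc' (fun x hx => Or.inr (Or.inl ⟨h, hx⟩))
  have hv' : ¬ v' := fun h => hnOdc' (fun x hx => Or.inr (Or.inr ⟨h, hx⟩))
  have memc : ∀ x, x ∈ shape T u v ↔ ∃ p ∈ T, x p.1 = p.2 := by
    intro x
    constructor
    · rintro (h | ⟨h, -⟩ | ⟨h, -⟩)
      · exact h
      · exact absurd h hu
      · exact absurd h hv
    · exact Or.inl
  have memc' : ∀ x, x ∈ shape T' u' v' ↔ ∃ p ∈ T', x p.1 = p.2 := by
    intro x
    constructor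
    · rintro (h | ⟨h, -⟩ | ⟨h, -⟩)
      · exact h
      · exact absurd h hu'
      · exact absurd h hv'
    · exact Or.inl
  -- opposite-halves relation between members of T and T'
  have opp : ∀ p ∈ T, ∀ q ∈ T', p.1 = q.1 ∧ p.2 = !q.2 := by
    intro p hp q hq
    by_contra hpq
    obtain ⟨x, hx1, hx2⟩ := halves_inter hN p.1 p.2 q.1 q.2 hpq
    exact clash x ((memc x).2 ⟨p, hp, hx1⟩) ((memc' x).2 ⟨q, hq, hx2⟩)
  obtain ⟨x0, hx0⟩ := hne
  obtain ⟨p, hp, -⟩ := (memc x0).1 hx0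
  obtain ⟨y0, hy0⟩ := hne'
  obtain ⟨q, hq, -⟩ := (memc' y0).1 hy0
  refine ⟨p.1, p.2, ?_, ?_⟩
  · ext x
    rw [memc x]
    constructor
    · rintro ⟨p', hp', hx⟩
      obtain ⟨h1, h2⟩ := opp p' hp' q hq
      obtain ⟨h1', h2'⟩ := opp p hp q hq
      have e1 : p'.1 = p.1 := h1.trans h1'.symm
      have e2 : p'.2 = p.2 := h2.trans h2'.symm
      rw [e1, e2] at hx
      exact hx
    · intro hx
      exact ⟨p, hp, hx⟩
  · ext x
    rw [memc' x]
    constructor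
    · rintro ⟨q', hq', hx⟩
      obtain ⟨h1, h2⟩ := opp p hp q' hq'
      rw [← h1] at hx
      show x p.1 = !p.2
      rw [h2, Bool.not_not]
      exact hx
    · intro hx
      refine ⟨q, hq, ?_⟩
      obtain ⟨h1, h2⟩ := opp p hp q hq
      have hx' : x p.1 = !p.2 := hx
      rw [← h1]
      rw [h2, Bool.not_not] at hx'
      exact hx'

end CSCounter
namespace CSCounter

variable {N : ℕ}

/-! ### Basic axioms for `CM N` -/

theorem cm_assoc (a b c : CM N) :
    mAdd (CM N) a (mAdd (CM N) b c) = mAdd (CM N) (mAdd (CM N) a b) c := by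
  simp only [cmAdd]
  exact Subtype.ext (Set.union_assoc _ _ _).symm

theorem cm_comm (a b : CM N) : mAdd (CM N) a b = mAdd (CM N) b a := by
  simp only [cmAdd]
  exact Subtype.ext (Set.union_comm _ _)

theorem cm_idem (a : CM N) : mAdd (CM N) a a = a := by
  simp only [cmAdd]
  exact Subtype.ext (Set.union_self _)

theorem cm_zero_add (a : CM N) : mAdd (CM N) (mZero (CM N)) a = a := by
  simp only [cmAdd, cmZero]
  exact Subtype.ext (Set.empty_union _)

theorem cm_ne_zero {a : CM N} (h : a.1.Nonempty) : a ≠ mZero (CM N) := by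
  intro he
  rw [cmZero] at he
  rw [he] at h
  exact Set.not_nonempty_empty h

theorem cm_nonempty_of_ne_zero {a : CM N} (h : a ≠ mZero (CM N)) : a.1.Nonempty := by
  rw [Set.nonempty_iff_ne_empty]
  intro he
  exact h (Subtype.ext (by rw [he, cmZero]))

theorem cm_nondegenerate (hN : 2 ≤ N) (a b : CM N) (h : mDelta (CM N) a b) :
    a ≠ mZero (CM N) ∧ b ≠ mZero (CM N) := by
  rw [cmDelta] at h
  rcases h with ⟨x, hx1, hx2⟩ | ⟨h1, h2⟩ | ⟨h1, h2⟩
  · exact ⟨cm_ne_zero ⟨x, hx1⟩, cm_ne_zero ⟨x, hx2⟩⟩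
  · obtain ⟨x, hx⟩ := ev_nonempty (N := N)
    obtain ⟨y, hy⟩ := od_nonempty hN
    exact ⟨cm_ne_zero ⟨x, h1 hx⟩, cm_ne_zero ⟨y, h2 hy⟩⟩
  · obtain ⟨x, hx⟩ := ev_nonempty (N := N)
    obtain ⟨y, hy⟩ := od_nonempty hN
    exact ⟨cm_ne_zero ⟨y, h1 hy⟩, cm_ne_zero ⟨x, h2 hx⟩⟩

theorem cm_refl (a : CM N) (h : a ≠ mZero (CM N)) : mDelta (CM N) a a := by
  obtain ⟨x, hx⟩ := cm_nonempty_of_ne_zero h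
  exact (cmDelta a a).2 (Or.inl ⟨x, hx, hx⟩)

theorem cm_symm (a b : CM N) (h : mDelta (CM N) a b) : mDelta (CM N) b a := by
  rw [cmDelta] at h ⊢
  rcases h with ⟨x, hx1, hx2⟩ | ⟨h1, h2⟩ | ⟨h1, h2⟩
  · exact Or.inl ⟨x, hx2, hx1⟩
  · exact Or.inr (Or.inr ⟨h2, h1⟩)
  · exact Or.inr (Or.inl ⟨h2, h1⟩)

theorem cm_ext (a b a₁ b₁ : CM N) (h : mDelta (CM N) a b)
    (ha : mLe (CM N) a a₁) (hb : mLe (CM N) b b₁) : mDelta (CM N) a₁ b₁ := by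
  rw [cmDelta] at h ⊢
  rw [cmLe] at ha hb
  rcases h with ⟨x, hx1, hx2⟩ | ⟨h1, h2⟩ | ⟨h1, h2⟩
  · exact Or.inl ⟨x, ha hx1, hb hx2⟩
  · exact Or.inr (Or.inl ⟨h1.trans ha, h2.trans hb⟩)
  · exact Or.inr (Or.inr ⟨h1.trans ha, h2.trans hb⟩)

theorem cm_D1 (a b c₀ c₁ : CM N) (h : ¬ mDelta (CM N) c₀ c₁)
    (h0 : mLe (CM N) b (mAdd (CM N) a c₀)) (h1 : mLe (CM N) b (mAdd (CM N) a c₁)) :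
    mLe (CM N) b a := by
  rw [cmDelta] at h
  have hdisj : ¬ (c₀.1 ∩ c₁.1).Nonempty := fun hn => h (Or.inl hn)
  rw [cmAdd] at h0 h1
  have h0 := (cmLe _ _).1 h0; have h1 := (cmLe _ _).1 h1; refine (cmLe _ _).2 ?_
  intro x hx
  rcases h0 hx with hxa | hx0
  · exact hxa
  rcases h1 hx with hxa | hx1
  · exact hxa
  · exact absurd ⟨x, hx0, hx1⟩ hdisj

/-! ### D2 for `n < N` -/

theorem cm_D2 (hN : 2 ≤ N) (n : ℕ) (hn : 0 < n) (hnN : n < N)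
    (a b : CM N) (c : Fin n → Bool → CM N)
    (hsep : ∀ i, ¬ mDelta (CM N) (c i false) (c i true))
    (hcov : ∀ f : Fin n → Bool,
      mLe (CM N) b (mSum (CM N) (List.ofFn fun i => c i (f i))) ∨
      mLe (CM N) a (mSum (CM N) (List.ofFn fun i => c i (f i)))) :
    ¬ mDelta (CM N) b a := by
  classical
  intro hba
  -- from each separation: disjointness and no pair-containment
  have hdisj : ∀ i, ¬ ((c i false).1 ∩ (c i true).1).Nonempty := by
    intro i hi
    exact hsep i ((cmDelta _ _).2 (Or.inl hi))
  have hnp1 : ∀ i, ¬ (EvS N ⊆ (c i false).1 ∧ OdS N ⊆ (c i true).1) := by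
    intro i hi
    exact hsep i ((cmDelta _ _).2 (Or.inr (Or.inl hi)))
  have hnp2 : ∀ i, ¬ (OdS N ⊆ (c i false).1 ∧ EvS N ⊆ (c i true).1) := by
    intro i hi
    exact hsep i ((cmDelta _ _).2 (Or.inr (Or.inr hi)))
  rw [cmDelta] at hba
  rcases hba with ⟨x, hxb, hxa⟩ | hpair
  · -- overlap case: avoid the common point x
    set f : Fin n → Bool := fun i => if x ∈ (c i false).1 then true else false with hf
    have hxout : ∀ i, x ∉ (c i (f i)).1 := by
      intro i
      by_cases hx0 : x ∈ (c i false).1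
      · simp only [hf, if_pos hx0]
        intro hx1
        exact hdisj i ⟨x, hx0, hx1⟩
      · simp only [hf, if_neg hx0]
        exact hx0
    have hxSig : x ∉ (mSum (CM N) (List.ofFn fun i => c i (f i))).1 := by
      rw [cmMemSum]
      rintro ⟨s, hs, hxs⟩
      rw [List.mem_ofFn] at hs
      obtain ⟨i, rfl⟩ := hs
      exact hxout i hxs
    rcases hcov f with hb | ha
    · exact hxSig ((cmLe _ _).1 hb hxb)
    · exact hxSig ((cmLe _ _).1 ha hxa)
  · -- pair case: both parity classes are inside b resp. a (in some order)
    -- classify each slot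
    have hslot : ∀ i : Fin n, (∃ g : Bool, (c i g).1 = ∅) ∨
        ∃ (j : Fin N) (s : Bool), (c i false).1 = halfS N j s ∧
          (c i true).1 = halfS N j (!s) := by
      intro i
      by_cases h0 : (c i false).1.Nonempty
      · by_cases h1 : (c i true).1.Nonempty
        · exact Or.inr (sep_lemma hN (c i false).2 (c i true).2 (hdisj i) h0 h1
            (hnp1 i) (hnp2 i))
        · exact Or.inl ⟨true, Set.not_nonempty_iff_eq_empty.1 h1⟩
      · exact Or.inl ⟨false, Set.not_nonempty_iff_eq_empty.1 h0⟩
    -- choose the coordinate of each half-slot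
    choose jfun hjfun using fun (i : Fin n)
        (h : ∃ (j : Fin N) (s : Bool), (c i false).1 = halfS N j s ∧
          (c i true).1 = halfS N j (!s)) => h
    -- the choice function: pick an empty side if there is one, else the `true` half
    have hchoice : ∀ i : Fin n, ∃ (g : Bool) (d : Set (Pt N)), (c i g).1 = d ∧
        (d = ∅ ∨ ∃ j : Fin N, d = halfS N j true) := by
      intro i
      rcases hslot i with ⟨g, hg⟩ | ⟨j, s, h0, h1⟩
      · exact ⟨g, ∅, hg, Or.inl rfl⟩
      · cases s with
        | true => exact ⟨false, halfS N j true, h0, Or.inr ⟨j, rfl⟩⟩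
        | false => exact ⟨true, halfS N j true, by simpa using h1, Or.inr ⟨j, rfl⟩⟩
    choose f d hd hdalt using hchoice
    -- the coordinates used
    have hcard : ∃ m : Fin N, ∀ (i : Fin n) (j : Fin N),
        d i = halfS N j true → j ≠ m := by
      -- the partial map i ↦ j misses some coordinate since n < N
      by_contra hsurj
      push_neg at hsurj
      have hsurj' : ∀ m : Fin N, ∃ i : Fin n, ∀ h : (d i ≠ ∅), True := fun m => by
        obtain ⟨i, j, hj, hjm⟩ := hsurj m
        exact ⟨i, fun _ => trivial⟩
      -- build a surjection Fin n → Fin N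
      have : ∀ m : Fin N, ∃ i : Fin n, ∃ j, d i = halfS N j true ∧ j = m := by
        intro m
        obtain ⟨i, j, hj, hjm⟩ := hsurj m
        exact ⟨i, j, hj, hjm⟩
      choose g hg using this
      have hginj : Function.Injective (fun m => g m) := by
        intro m m' hmm
        obtain ⟨j, hj, rfl⟩ := hg m
        obtain ⟨j', hj', rfl⟩ := hg m'
        simp only at hmm
        rw [hmm] at hj
        rw [hj] at hj'
        -- halfS N j true = halfS N j' true → j = j'
        by_contra hne
        obtain ⟨y, hy⟩ := od_point_half hN j' false
        have : (pt1 j' : Pt N) ∈ halfS N j' true := by simp [halfS, pt1]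
        rw [← hj'] at this
        simp only [halfS, Set.mem_setOf_eq, pt1] at this
        exact hne (by simpa using this)
      have := Fintype.card_le_of_injective _ hginj
      simp only [Fintype.card_fin] at this
      omega
    obtain ⟨m, hm⟩ := hcard
    -- the two witnesses
    have hpout : (pt0 : Pt N) ∉ (mSum (CM N) (List.ofFn fun i => c i (f i))).1 := by
      rw [cmMemSum]
      rintro ⟨s, hs, hxs⟩
      rw [List.mem_ofFn] at hs
      obtain ⟨i, rfl⟩ := hs
      rw [hd i] at hxs
      rcases hdalt i with he | ⟨j, hj⟩
      · rw [he] at hxs; exact hxs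
      · rw [hj] at hxs
        simp [halfS, pt0] at hxs
    have hqout : (pt1 m : Pt N) ∉ (mSum (CM N) (List.ofFn fun i => c i (f i))).1 := by
      rw [cmMemSum]
      rintro ⟨s, hs, hxs⟩
      rw [List.mem_ofFn] at hs
      obtain ⟨i, rfl⟩ := hs
      rw [hd i] at hxs
      rcases hdalt i with he | ⟨j, hj⟩
      · rw [he] at hxs; exact hxs
      · rw [hj] at hxs
        simp only [halfS, Set.mem_setOf_eq, pt1] at hxs
        exact (hm i j hj) (by simpa using hxs)
    -- contradiction with coverage
    have hev : EvS N ⊆ b.1 ∨ OdS N ⊆ b.1 := by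
      rcases hpair with ⟨h1, -⟩ | ⟨h1, -⟩
      · exact Or.inl h1
      · exact Or.inr h1
    have hao : EvS N ⊆ a.1 ∨ OdS N ⊆ a.1 := by
      rcases hpair with ⟨-, h2⟩ | ⟨-, h2⟩
      · exact Or.inr h2
      · exact Or.inl h2
    have hout : ∀ s : Set (Pt N), EvS N ⊆ s ∨ OdS N ⊆ s →
        ¬ s ⊆ (mSum (CM N) (List.ofFn fun i => c i (f i))).1 := by
      rintro s (hs | hs) hsub
      · exact hpout (hsub (hs pt0_mem_ev))
      · exact hqout (hsub (hs (pt1_mem_od m)))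
    rcases hcov f with hb | ha
    · exact hout b.1 hev ((cmLe _ _).1 hb)
    · exact hout a.1 hao ((cmLe _ _).1 ha)

end CSCounter
namespace CSCounter

variable {N : ℕ}

/-- D2 at level `N` fails in `CM N`. -/
theorem cm_not_D2 (hN : 2 ≤ N) :
    ∃ (a b : CM N) (c : Fin N → Bool → CM N),
      (∀ i, ¬ mDelta (CM N) (c i false) (c i true)) ∧
      (∀ f : Fin N → Bool,
        mLe (CM N) b (mSum (CM N) (List.ofFn fun i => c i (f i))) ∨
        mLe (CM N) a (mSum (CM N) (List.ofFn fun i => c i (f i)))) ∧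
      mDelta (CM N) b a := by
  refine ⟨⟨OdS N, Fam.od⟩, ⟨EvS N, Fam.ev⟩,
    fun i bb => ⟨halfS N i bb, Fam.half i bb⟩, ?_, ?_, ?_⟩
  · intro i h
    have h := (cmDelta _ _).1 h
    rcases h with ⟨x, hx1, hx2⟩ | ⟨h1, h2⟩ | ⟨h1, h2⟩
    · simp only [halfS, Set.mem_setOf_eq] at hx1 hx2
      rw [hx1] at hx2; exact Bool.false_ne_true hx2
    · exact ev_not_subset_half hN i false h1
    · exact od_not_subset_half hN i false h1
  · intro f
    set z : Pt N := fun i => !(f i) with hz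
    have key : ∀ x : Pt N, x ≠ z →
        x ∈ (mSum (CM N) (List.ofFn fun i =>
          (⟨halfS N i (f i), Fam.half i (f i)⟩ : CM N))).1 := by
      intro x hxz
      have : ∃ i, x i ≠ z i := by
        by_contra hc
        push_neg at hc
        exact hxz (funext hc)
      obtain ⟨i, hi⟩ := this
      have hxi : x i = f i := by
        have : z i = !(f i) := rfl
        rw [this] at hi
        cases hfi : f i <;> cases hxi : x i <;> simp_all
      rw [cmMemSum]
      exact ⟨_, List.mem_ofFn.2 ⟨i, rfl⟩, hxi⟩
    by_cases hpar : Even (cnt N z)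
    · -- z even: every odd point differs from z, so OdS ⊆ Σ
      right
      refine (cmLe _ _).2 ?_
      intro x hx
      apply key
      intro he
      rw [he] at hx
      have hx' : ¬ Even (cnt N z) := hx
      exact hx' hpar
    · -- z odd: every even point differs from z
      left
      refine (cmLe _ _).2 ?_
      intro x hx
      apply key
      intro he
      rw [he] at hx
      have hx' : Even (cnt N z) := hx
      exact hpar hx'
  · exact (cmDelta _ _).2 (Or.inr (Or.inl ⟨Set.Subset.rfl, Set.Subset.rfl⟩))

end CSCounter
namespace CSCounter

open Filter FirstOrder.Language

section Ultra

variable {M : ℕ → Type} [∀ k, csLang.Structure (M k)] {u : Ultrafilter ℕ}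

/-- Explicit quotient map into the ultraproduct. -/
def pmk (u : Ultrafilter ℕ) (M : ℕ → Type) (g : ∀ k, M k) :
    Filter.Product (Ultrafilter.toFilter u) M :=
  Quotient.mk ((Ultrafilter.toFilter u).productSetoid M) g

local notation "UP" => Filter.Product (Ultrafilter.toFilter u) M

theorem psurj (x : UP) : ∃ g : ∀ k, M k, x = pmk u M g :=
  Quotient.inductionOn x fun g => ⟨g, rfl⟩

theorem peq (g h : ∀ k, M k) :
    (pmk u M g = pmk u M h) ↔ ∀ᶠ k in ↑u, g k = h k :=
  ⟨fun he => Quotient.exact he, fun he => Quotient.sound he⟩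

theorem padd (g h : ∀ k, M k) :
    mAdd UP (pmk u M g) (pmk u M h) = pmk u M (fun k => mAdd (M k) (g k) (h k)) := by
  show Structure.funMap (L := csLang) CSFunc.plus ![pmk u M g, pmk u M h] = _
  have hv : (![pmk u M g, pmk u M h] : Fin 2 → UP) =
      fun i => Quotient.mk ((Ultrafilter.toFilter u).productSetoid M) (![g, h] i) := by
    funext i; fin_cases i <;> rfl
  rw [hv]
  refine (funMap_quotient_mk' (L := csLang) ((Ultrafilter.toFilter u).productSetoid M) CSFunc.plus ![g, h]).trans ?_
  refine congrArg _ (funext fun k => ?_)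
  show Structure.funMap (L := csLang) CSFunc.plus (fun i => ![g, h] i k) = _
  refine congrArg _ (funext fun i => ?_)
  fin_cases i <;> rfl

theorem pzero : mZero UP = pmk u M (fun k => mZero (M k)) := by
  show Structure.funMap (L := csLang) CSFunc.zero ![] = _
  have hv : (![] : Fin 0 → UP) =
      fun i => Quotient.mk ((Ultrafilter.toFilter u).productSetoid M)
        ((fun i : Fin 0 => i.elim0) i) :=
    funext fun i => i.elim0
  rw [hv]
  refine (funMap_quotient_mk' (L := csLang) ((Ultrafilter.toFilter u).productSetoid M) CSFunc.zero _).trans ?_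
  refine congrArg _ (funext fun k => ?_)
  show Structure.funMap (L := csLang) CSFunc.zero _ = _
  exact congrArg _ (funext fun i => i.elim0)

theorem pdelta (g h : ∀ k, M k) :
    mDelta UP (pmk u M g) (pmk u M h) ↔ ∀ᶠ k in ↑u, mDelta (M k) (g k) (h k) := by
  show Structure.RelMap (L := csLang) CSRel.delta ![pmk u M g, pmk u M h] ↔ _
  have hv : (![pmk u M g, pmk u M h] : Fin 2 → UP) =
      fun i => Quotient.mk ((Ultrafilter.toFilter u).productSetoid M) (![g, h] i) := by
    funext i; fin_cases i <;> rfl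
  rw [hv]
  refine (relMap_quotient_mk' (L := csLang) ((Ultrafilter.toFilter u).productSetoid M) CSRel.delta ![g, h]).trans ?_
  show (∀ᶠ k in ↑u, Structure.RelMap (L := csLang) CSRel.delta fun i => ![g, h] i k) ↔ _
  refine eventually_congr (Eventually.of_forall fun k => ?_)
  have hv2 : (fun i => ![g, h] i k) = ![g k, h k] := by
    funext i; fin_cases i <;> rfl
  rw [hv2]
  exact Iff.rfl

theorem ple (g h : ∀ k, M k) :
    mLe UP (pmk u M g) (pmk u M h) ↔ ∀ᶠ k in ↑u, mLe (M k) (g k) (h k) := by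
  show mAdd UP (pmk u M g) (pmk u M h) = pmk u M h ↔ _
  rw [padd, peq]
  exact Iff.rfl

theorem psum : ∀ (n : ℕ) (g : Fin n → ∀ k, M k),
    mSum UP (List.ofFn fun i => pmk u M (g i)) =
      pmk u M (fun k => mSum (M k) (List.ofFn fun i => g i k)) := by
  intro n
  induction n with
  | zero =>
      intro g
      simp only [List.ofFn_zero]
      show mZero UP = _
      rw [pzero]
      rfl
  | succ n ih =>
      intro g
      rw [List.ofFn_succ]
      show mAdd UP (pmk u M (g 0)) (mSum UP (List.ofFn fun i => pmk u M (g i.succ))) = _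
      rw [ih fun i => g i.succ, padd]
      refine congrArg _ (funext fun k => ?_)
      show mAdd (M k) (g 0 k) (mSum (M k) (List.ofFn fun i => g i.succ k)) = _
      rw [show (List.ofFn fun i : Fin (n+1) => g i k) =
          g 0 k :: List.ofFn fun i : Fin n => g i.succ k from List.ofFn_succ]
      rfl

end Ultra

end CSCounter
namespace CSCounter

open Filter FirstOrder.Language

/-- The family of counterexample structures, indexed so that `Mfam k` satisfies
D2 up to level `k+1` but not at level `k+2`. -/
abbrev Mfam (k : ℕ) : Type := CM (k + 2)

theorem hdom (n : ℕ) : ∀ᶠ k in ↑(Filter.hyperfilter ℕ), n < k + 2 :=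
  (Filter.eventually_atTop.2 ⟨n, fun k hk => by omega⟩).filter_mono
    Nat.hyperfilter_le_atTop

theorem up_isIvanova :
    IsIvanova (Filter.Product (Ultrafilter.toFilter (Filter.hyperfilter ℕ)) Mfam) := by
  set u : Ultrafilter ℕ := Filter.hyperfilter ℕ with hu
  refine ⟨?_, ?_, ?_, ?_, ?_, ?_, ?_, ?_, ?_, ?_⟩
  · -- assoc
    intro x y z
    obtain ⟨g, rfl⟩ := psurj x
    obtain ⟨h, rfl⟩ := psurj y
    obtain ⟨w, rfl⟩ := psurj z
    rw [padd h w, padd g, padd g h, padd]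
    exact (peq _ _).2 (Eventually.of_forall fun k => cm_assoc _ _ _)
  · -- comm
    intro x y
    obtain ⟨g, rfl⟩ := psurj x
    obtain ⟨h, rfl⟩ := psurj y
    rw [padd, padd]
    exact (peq _ _).2 (Eventually.of_forall fun k => cm_comm _ _)
  · -- idem
    intro x
    obtain ⟨g, rfl⟩ := psurj x
    rw [padd]
    exact (peq _ _).2 (Eventually.of_forall fun k => cm_idem _)
  · -- zero
    intro x
    obtain ⟨g, rfl⟩ := psurj x
    rw [pzero, padd]
    exact (peq _ _).2 (Eventually.of_forall fun k => cm_zero_add _)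
  · -- nondegeneracy
    intro x y h
    obtain ⟨g, rfl⟩ := psurj x
    obtain ⟨h', rfl⟩ := psurj y
    rw [pdelta] at h
    constructor
    · intro he
      rw [pzero, peq] at he
      obtain ⟨k, hk1, hk2⟩ := (h.and he).exists
      exact (cm_nondegenerate (by omega) _ _ hk1).1 hk2
    · intro he
      rw [pzero, peq] at he
      obtain ⟨k, hk1, hk2⟩ := (h.and he).exists
      exact (cm_nondegenerate (by omega) _ _ hk1).2 hk2
  · -- reflexivity
    intro x hx
    obtain ⟨g, rfl⟩ := psurj x
    rw [pdelta]
    rw [pzero] at hx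
    have : ¬ ∀ᶠ k in ↑u, g k = mZero (Mfam k) := fun hc => hx ((peq _ _).2 hc)
    have hne : ∀ᶠ k in ↑u, g k ≠ mZero (Mfam k) := Ultrafilter.eventually_not.2 this
    exact hne.mono fun k hk => cm_refl _ hk
  · -- symmetry
    intro x y h
    obtain ⟨g, rfl⟩ := psurj x
    obtain ⟨h', rfl⟩ := psurj y
    rw [pdelta] at h ⊢
    exact h.mono fun k hk => cm_symm _ _ hk
  · -- extension
    intro x y x₁ y₁ h hx hy
    obtain ⟨g, rfl⟩ := psurj x
    obtain ⟨h', rfl⟩ := psurj y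
    obtain ⟨g₁, rfl⟩ := psurj x₁
    obtain ⟨h₁, rfl⟩ := psurj y₁
    rw [pdelta] at h ⊢
    rw [ple] at hx hy
    exact ((h.and hx).and hy).mono fun k ⟨⟨h1, h2⟩, h3⟩ => cm_ext _ _ _ _ h1 h2 h3
  · -- D1
    intro x y c₀ c₁ h h0 h1
    obtain ⟨g, rfl⟩ := psurj x
    obtain ⟨h', rfl⟩ := psurj y
    obtain ⟨g₀, rfl⟩ := psurj c₀
    obtain ⟨g₁, rfl⟩ := psurj c₁
    have hnd : ∀ᶠ k in ↑u, ¬ mDelta (Mfam k) (g₀ k) (g₁ k) :=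
      Ultrafilter.eventually_not.2 fun hc => h ((pdelta _ _).2 hc)
    rw [padd, ple] at h0 h1
    rw [ple]
    exact ((hnd.and h0).and h1).mono fun k ⟨⟨h1', h2'⟩, h3'⟩ => cm_D1 _ _ _ _ h1' h2' h3'
  · -- D2
    intro n hn x y c hsep hcov
    obtain ⟨ga, rfl⟩ := psurj x
    obtain ⟨gb, rfl⟩ := psurj y
    have hc : ∀ i bb, ∃ gc, c i bb = pmk u Mfam gc := fun i bb => psurj _
    choose crep hcrep using hc
    simp only [hcrep] at hsep hcov
    have hsep' : ∀ i, ∀ᶠ k in ↑u, ¬ mDelta (Mfam k) (crep i false k) (crep i true k) :=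
      fun i => Ultrafilter.eventually_not.2 fun hcon => hsep i ((pdelta _ _).2 hcon)
    have hcov' : ∀ f : Fin n → Bool, ∀ᶠ k in ↑u,
        mLe (Mfam k) (gb k) (mSum (Mfam k) (List.ofFn fun i => crep i (f i) k)) ∨
        mLe (Mfam k) (ga k) (mSum (Mfam k) (List.ofFn fun i => crep i (f i) k)) := by
      intro f
      rcases hcov f with hcf | hcf
      · rw [psum n (fun i => crep i (f i)), ple] at hcf
        exact hcf.mono fun k hk => Or.inl hk
      · rw [psum n (fun i => crep i (f i)), ple] at hcf
        exact hcf.mono fun k hk => Or.inr hk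
    have hbig : ∀ᶠ k in ↑u,
        ((∀ i, ¬ mDelta (Mfam k) (crep i false k) (crep i true k)) ∧
          (∀ f : Fin n → Bool,
            mLe (Mfam k) (gb k) (mSum (Mfam k) (List.ofFn fun i => crep i (f i) k)) ∨
            mLe (Mfam k) (ga k) (mSum (Mfam k) (List.ofFn fun i => crep i (f i) k)))) ∧
          n < k + 2 :=
      ((Filter.eventually_all.2 hsep').and (Filter.eventually_all.2 hcov')).and (hdom n)
    intro hdel
    rw [pdelta] at hdel
    obtain ⟨k, hk1, ⟨hk2, hk3⟩, hk4⟩ := (hdel.and hbig).exists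
    exact cm_D2 (by omega) n hn hk4 (ga k) (gb k) (fun i bb => crep i bb k) hk2 hk3 hk1

end CSCounter


/-- The class of Ivanova Contact join-semilattices is not finitely axiomatizable:
no single first-order sentence in the language `{+, 0, δ}` has as models exactly
the Ivanova Contact join-semilattices. -/
theorem stmt11 :
    ¬ ∃ ψ : csLang.Sentence,
      ∀ (M : Type) [csLang.Structure M], (M ⊨ ψ) ↔ IsIvanova M := by
  rintro ⟨ψ, hψ⟩
  classical
  have hiva := CSCounter.up_isIvanova
  have hmod : (Filter.Product (Ultrafilter.toFilter (Filter.hyperfilter ℕ))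
      CSCounter.Mfam) ⊨ ψ := (hψ _).2 hiva
  rw [FirstOrder.Language.Ultraproduct.sentence_realize] at hmod
  obtain ⟨k, hk⟩ := hmod.exists
  have hIk : IsIvanova (CSCounter.CM (k + 2)) := (hψ _).1 hk
  obtain ⟨a, b, c, hsep, hcov, hba⟩ := CSCounter.cm_not_D2 (N := k + 2) (by omega)
  exact hIk.2.2.2.2.2.2.2.2.2 (k + 2) (by omega) a b c hsep hcov hba
end

section
/- Let S be a join-semilattice with least element 0 equipped with the overlap contact relation (a δ b if and only if there is p ∈ S with 0 < p, p ≤ a and p ≤ b). Then S satisfies (D1) if and only if S can be embedded into the powerset of some set X with the nonempty-intersection contact; that is, if and only if there exist a set X and an injective map h : S → 𝒫(X) with h(0) = ∅, h(a + b) = h(a) ∪ h(b) for all a, b ∈ S, and a δ b if and only if h(a) ∩ h(b) ≠ ∅, for all a, b ∈ S. -/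
section Aux

variable {S : Type} [SemilatticeSup S] [OrderBot S]

/-- An ideal: contains ⊥, downward closed, closed under joins. -/
def IsIdl (I : Set S) : Prop :=
  ⊥ ∈ I ∧ (∀ x y : S, x ≤ y → y ∈ I → x ∈ I) ∧ (∀ x ∈ I, ∀ y ∈ I, x ⊔ y ∈ I)

/-- A "point": up-closed, prime, pairwise in contact. -/
def IsClanPt (δ : S → S → Prop) (F : Set S) : Prop :=
  (∀ x ∈ F, ∀ y : S, x ≤ y → y ∈ F) ∧ (∀ x y : S, x ⊔ y ∈ F → x ∈ F ∨ y ∈ F) ∧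
    (∀ x ∈ F, ∀ y ∈ F, δ x y)

lemma point_lemma (δ : S → S → Prop) (hD1 : CondD1 δ) (I₀ : Set S) (hI₀ : IsIdl I₀)
    (p : S) (hp : p ∉ I₀) :
    ∃ F : Set S, IsClanPt δ F ∧ p ∈ F ∧ ∀ x ∈ I₀, x ∉ F := by
  classical
  obtain ⟨M, hIM, hM⟩ := zorn_subset_nonempty {I : Set S | IsIdl I ∧ p ∉ I}
    (fun c hcS hchain hcne => by
      refine ⟨⋃₀ c, ⟨⟨?_, ?_, ?_⟩, ?_⟩, fun s hs => Set.subset_sUnion_of_mem hs⟩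
      · obtain ⟨s, hs⟩ := hcne
        exact ⟨s, hs, (hcS hs).1.1⟩
      · rintro x y hxy ⟨s, hs, hys⟩
        exact ⟨s, hs, (hcS hs).1.2.1 x y hxy hys⟩
      · rintro x ⟨s, hs, hxs⟩ y ⟨t, ht, hyt⟩
        rcases hchain.total hs ht with h | h
        · exact ⟨t, ht, (hcS ht).1.2.2 x (h hxs) y hyt⟩
        · exact ⟨s, hs, (hcS hs).1.2.2 x hxs y (h hyt)⟩
      · rintro ⟨s, hs, hps⟩
        exact (hcS hs).2 hps) I₀ ⟨hI₀, hp⟩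
  obtain ⟨⟨hMidl, hpM⟩, hmax⟩ := hM
  refine ⟨Mᶜ, ⟨?_, ?_, ?_⟩, hpM, fun x hx hxc => hxc (hIM hx)⟩
  · intro x hx y hxy hyM
    exact hx (hMidl.2.1 x y hxy hyM)
  · intro x y hxy
    by_contra hc
    push_neg at hc
    obtain ⟨hxM, hyM⟩ := hc
    simp only [Set.mem_compl_iff, not_not] at hxM hyM
    exact hxy (hMidl.2.2 x hxM y hyM)
  · intro x hx y hy
    by_contra hδ
    -- extend M by x and by y
    have key : ∀ z : S, z ∉ M → ∃ m ∈ M, p ≤ m ⊔ z := by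
      intro z hz
      set J : Set S := {t : S | ∃ m ∈ M, t ≤ m ⊔ z} with hJ
      have hJidl : IsIdl J := by
        refine ⟨⟨⊥, hMidl.1, bot_le⟩, ?_, ?_⟩
        · rintro a b hab ⟨m, hm, hbm⟩
          exact ⟨m, hm, hab.trans hbm⟩
        · rintro a ⟨m, hm, ham⟩ b ⟨m', hm', hbm⟩
          refine ⟨m ⊔ m', hMidl.2.2 m hm m' hm', ?_⟩
          exact sup_le (ham.trans (sup_le_sup_right le_sup_left z))
            (hbm.trans (sup_le_sup_right le_sup_right z))
      have hMJ : M ⊆ J := fun m hm => ⟨m, hm, le_sup_left⟩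
      have hpJ : p ∈ J := by
        by_contra hpJ
        have hJM : J ⊆ M := hmax ⟨hJidl, hpJ⟩ hMJ
        exact hz (hJM ⟨⊥, hMidl.1, by simp⟩)
      exact hpJ
    obtain ⟨m₁, hm₁, hpm₁⟩ := key x hx
    obtain ⟨m₂, hm₂, hpm₂⟩ := key y hy
    have h1 : p ≤ (m₁ ⊔ m₂) ⊔ x := hpm₁.trans (sup_le_sup_right le_sup_left x)
    have h2 : p ≤ (m₁ ⊔ m₂) ⊔ y := hpm₂.trans (sup_le_sup_right le_sup_right y)
    have hpm : p ≤ m₁ ⊔ m₂ := hD1 (m₁ ⊔ m₂) p x y hδ h1 h2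
    exact hpM (hMidl.2.1 p (m₁ ⊔ m₂) hpm (hMidl.2.2 m₁ hm₁ m₂ hm₂))

end Aux

theorem stmt14 {S : Type} [SemilatticeSup S] [OrderBot S] (δ : S → S → Prop)
    (hov : ∀ a b : S, δ a b ↔ ∃ p : S, ⊥ < p ∧ p ≤ a ∧ p ≤ b) :
    CondD1 δ ↔
      ∃ (X : Type) (h : S → Set X),
        Function.Injective h ∧
        h ⊥ = ∅ ∧
        (∀ a b : S, h (a ⊔ b) = h a ∪ h b) ∧
        (∀ a b : S, δ a b ↔ (h a ∩ h b).Nonempty) := by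
  constructor
  · intro hD1
    classical
    refine ⟨Set S, fun a => {F : Set S | IsClanPt δ F ∧ a ∈ F}, ?_, ?_, ?_, ?_⟩
    · -- injective
      have sep : ∀ a b : S, ¬ a ≤ b →
          ∃ F : Set S, IsClanPt δ F ∧ a ∈ F ∧ b ∉ F := by
        intro a b hab
        obtain ⟨F, hF, haF, hI⟩ := point_lemma δ hD1 {t : S | t ≤ b}
          ⟨bot_le, fun x y hxy hy => hxy.trans hy, fun x hx y hy => sup_le hx hy⟩ a hab
        exact ⟨F, hF, haF, hI b le_rfl⟩
      intro a b hab
      have hab' : {F : Set S | IsClanPt δ F ∧ a ∈ F} = {F : Set S | IsClanPt δ F ∧ b ∈ F} := hab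
      by_contra hne
      rcases not_and_or.mp fun h : a ≤ b ∧ b ≤ a => hne (le_antisymm h.1 h.2) with h | h
      · obtain ⟨F, hF, haF, hbF⟩ := sep a b h
        have : F ∈ {F : Set S | IsClanPt δ F ∧ b ∈ F} := hab' ▸ ⟨hF, haF⟩
        exact hbF this.2
      · obtain ⟨F, hF, hbF, haF⟩ := sep b a h
        have : F ∈ {F : Set S | IsClanPt δ F ∧ b ∈ F} := ⟨hF, hbF⟩
        rw [← hab'] at this
        exact haF this.2
    · -- h ⊥ = ∅
      ext F
      simp only [Set.mem_setOf_eq, Set.mem_empty_iff_false, iff_false, not_and]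
      intro hF hbot
      obtain ⟨p, hp, hpb, -⟩ := (hov ⊥ ⊥).mp (hF.2.2 ⊥ hbot ⊥ hbot)
      exact absurd (le_bot_iff.mp hpb) hp.ne'
    · -- join
      intro a b
      ext F
      simp only [Set.mem_setOf_eq, Set.mem_union]
      constructor
      · rintro ⟨hF, hab⟩
        rcases hF.2.1 a b hab with h | h
        · exact Or.inl ⟨hF, h⟩
        · exact Or.inr ⟨hF, h⟩
      · rintro (⟨hF, h⟩ | ⟨hF, h⟩)
        · exact ⟨hF, hF.1 a h _ le_sup_left⟩
        · exact ⟨hF, hF.1 b h _ le_sup_right⟩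
    · -- contact
      intro a b
      constructor
      · intro hab
        obtain ⟨p, hp, hpa, hpb⟩ := (hov a b).mp hab
        obtain ⟨F, hF, hpF, -⟩ := point_lemma δ hD1 {t : S | t ≤ ⊥}
          ⟨le_rfl, fun x y hxy hy => hxy.trans hy, fun x hx y hy => sup_le hx hy⟩ p
          (by simpa using hp.ne')
        exact ⟨F, ⟨hF, hF.1 p hpF a hpa⟩, ⟨hF, hF.1 p hpF b hpb⟩⟩
      · rintro ⟨F, ⟨hF, haF⟩, ⟨-, hbF⟩⟩
        exact hF.2.2 a haF b hbF
  · rintro ⟨X, h, hinj, hbot, hsup, hcon⟩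
    intro a b c₀ c₁ hc hb0 hb1
    have hmono : ∀ x y : S, x ≤ y → h x ⊆ h y := by
      intro x y hxy
      have : h (x ⊔ y) = h x ∪ h y := hsup x y
      rw [sup_eq_right.mpr hxy] at this
      rw [this]
      exact Set.subset_union_left
    have hrefl : ∀ x y : S, h x ⊆ h y → x ≤ y := by
      intro x y hxy
      have : h (x ⊔ y) = h y := by
        rw [hsup x y, Set.union_eq_right.mpr hxy]
      exact sup_eq_right.mp (hinj this)
    have hempty : h c₀ ∩ h c₁ = ∅ := by
      by_contra hne
      exact hc ((hcon c₀ c₁).mpr (Set.nonempty_iff_ne_empty.mpr hne))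
    apply hrefl
    intro x hx
    have h0 := hmono b (a ⊔ c₀) hb0 hx
    have h1 := hmono b (a ⊔ c₁) hb1 hx
    rw [hsup] at h0 h1
    rcases h0 with h0 | h0
    · exact h0
    rcases h1 with h1 | h1
    · exact h1
    · exact absurd (Set.mem_inter h0 h1) (by simp [hempty])
end

section
/- A weak contact semilattice S satisfies (D1) together with (D2_n) for every positive integer n (i.e., S is an Ivanova Contact join-semilattice) if and only if S can be embedded into the powerset of some set X with the nonempty-intersection contact; that is, if and only if there exist a set X and an injective map h : S → 𝒫(X) with h(0) = ∅, h(a + b) = h(a) ∪ h(b) for all a, b ∈ S, and a δ b if and only if h(a) ∩ h(b) ≠ ∅, for all a, b ∈ S. -/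
section RepAux

variable {S : Type} [SemilatticeSup S] [OrderBot S] (δ : S → S → Prop)

/-- An ideal: contains ⊥, downward closed, closed under joins. -/
def RepIsIdl (K : Set S) : Prop :=
  (⊥ : S) ∈ K ∧ (∀ x y : S, x ≤ y → y ∈ K → x ∈ K) ∧
    (∀ x y : S, x ∈ K → y ∈ K → x ⊔ y ∈ K)

/-- Pick one component of a pair according to a Bool. -/
def repPick (p : S × S) (b : Bool) : S := if b then p.2 else p.1

/-- Consistency of an ideal relative to a contact pair a, b. -/
def RepCons (a b : S) (K : Set S) : Prop :=
  ∀ T : Finset (S × S), (∀ p ∈ T, ¬ δ p.1 p.2) → ∀ k ∈ K,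
    ∃ σ : S × S → Bool,
      ¬ a ≤ k ⊔ T.sup (fun p => repPick p (σ p)) ∧
      ¬ b ≤ k ⊔ T.sup (fun p => repPick p (σ p))

lemma rep_idl_gen {K : Set S} (hK : RepIsIdl K) (u : S) :
    RepIsIdl {x : S | ∃ k ∈ K, x ≤ k ⊔ u} := by
  obtain ⟨hbot, hdown, hjoin⟩ := hK
  refine ⟨⟨⊥, hbot, bot_le⟩, ?_, ?_⟩
  · rintro x y hxy ⟨k, hk, hky⟩; exact ⟨k, hk, hxy.trans hky⟩
  · rintro x y ⟨k, hk, hkx⟩ ⟨k', hk', hky⟩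
    exact ⟨k ⊔ k', hjoin _ _ hk hk',
      sup_le (hkx.trans (sup_le_sup le_sup_left le_rfl))
        (hky.trans (sup_le_sup le_sup_right le_rfl))⟩

/-- Lemma A : separation of a ≰ b by a clique prime upset (complement of ideal). -/
lemma rep_lemA (hD1 : CondD1 δ) {a b : S} (hab : ¬ a ≤ b) :
    ∃ I : Set S, RepIsIdl I ∧ (∀ u v : S, u ∉ I → v ∉ I → δ u v) ∧ b ∈ I ∧ a ∉ I := by
  classical
  set 𝒮 : Set (Set S) := {I | RepIsIdl I ∧ b ∈ I ∧ a ∉ I} with h𝒮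
  have hzorn : ∃ m, {x : S | x ≤ b} ⊆ m ∧ Maximal (· ∈ 𝒮) m := by
    refine zorn_subset_nonempty 𝒮 ?_ _ ⟨⟨bot_le, fun x y hxy hy => hxy.trans hy,
      fun x y hx hy => sup_le hx hy⟩, le_rfl, hab⟩
    intro c hc hchain hcne
    refine ⟨⋃₀ c, ⟨⟨?_, ?_, ?_⟩, ?_, ?_⟩, fun s hs => Set.subset_sUnion_of_mem hs⟩
    · obtain ⟨I, hI⟩ := hcne; exact ⟨I, hI, (hc hI).1.1⟩
    · rintro x y hxy ⟨I, hI, hyI⟩; exact ⟨I, hI, (hc hI).1.2.1 x y hxy hyI⟩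
    · rintro x y ⟨I, hI, hxI⟩ ⟨J, hJ, hyJ⟩
      rcases hchain.total hI hJ with h | h
      · exact ⟨J, hJ, (hc hJ).1.2.2 x y (h hxI) hyJ⟩
      · exact ⟨I, hI, (hc hI).1.2.2 x y hxI (h hyJ)⟩
    · obtain ⟨I, hI⟩ := hcne; exact ⟨I, hI, (hc hI).2.1⟩
    · rintro ⟨I, hI, haI⟩; exact (hc hI).2.2 haI
  obtain ⟨I, -, hImax⟩ := hzorn
  obtain ⟨⟨hIidl, hbI, haI⟩, hmax⟩ := hImax
  refine ⟨I, hIidl, ?_, hbI, haI⟩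
  intro u v hu hv
  by_contra huv
  -- the ideal generated by I and u must contain a
  have key : ∀ w : S, w ∉ I → ∃ k ∈ I, a ≤ k ⊔ w := by
    intro w hw
    by_contra hne
    push_neg at hne
    have hmem : {x : S | ∃ k ∈ I, x ≤ k ⊔ w} ∈ 𝒮 := by
      refine ⟨rep_idl_gen hIidl w, ⟨b, hbI, le_sup_left⟩, ?_⟩
      rintro ⟨k, hk, hkw⟩; exact hne k hk hkw
    have hsub : I ⊆ {x : S | ∃ k ∈ I, x ≤ k ⊔ w} := fun x hx => ⟨x, hx, le_sup_left⟩
    have := hmax hmem hsub ⟨⊥, hIidl.1, le_sup_right⟩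
    exact hw this
  obtain ⟨k₀, hk₀, hau⟩ := key u hu
  obtain ⟨k₁, hk₁, hav⟩ := key v hv
  have h1 : a ≤ (k₀ ⊔ k₁) ⊔ u := hau.trans (sup_le_sup le_sup_left le_rfl)
  have h2 : a ≤ (k₀ ⊔ k₁) ⊔ v := hav.trans (sup_le_sup le_sup_right le_rfl)
  have := hD1 (k₀ ⊔ k₁) a u v huv h1 h2
  exact haI (hIidl.2.1 a (k₀ ⊔ k₁) this (hIidl.2.2 _ _ hk₀ hk₁))

/-- Lemma B: a contact is witnessed by a clique prime upset containing both elements. -/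
lemma rep_lemB (hwc : IsWeakContact δ) (hD2 : ∀ n : ℕ, 0 < n → CondD2 n δ)
    {a b : S} (hab : δ a b) :
    ∃ K : Set S, RepIsIdl K ∧ (∀ u v : S, u ∉ K → v ∉ K → δ u v) ∧ a ∉ K ∧ b ∉ K := by
  classical
  have hane : a ≠ ⊥ := (hwc.1 a b hab).1
  have hbne : b ≠ ⊥ := (hwc.1 a b hab).2
  set 𝒮 : Set (Set S) := {K | RepIsIdl K ∧ RepCons δ a b K} with h𝒮
  have hK0 : {x : S | x ≤ ⊥} ∈ 𝒮 := by
    refine ⟨⟨le_rfl, fun x y hxy hy => hxy.trans hy, fun x y hx hy => sup_le hx hy⟩, ?_⟩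
    intro T hT k hk
    have hk' : k = ⊥ := le_bot_iff.mp hk
    rcases eq_or_ne T.card 0 with hc | hc
    · have hT0 : T = ∅ := Finset.card_eq_zero.mp hc
      subst hT0
      exact ⟨fun _ => false,
        by simpa [hk'] using hane,
        by simpa [hk'] using hbne⟩
    · have hpos : 0 < T.card := Nat.pos_of_ne_zero hc
      set e : {p // p ∈ T} ≃ Fin T.card := Fintype.equivFinOfCardEq (Fintype.card_coe T)
        with he_def
      set c : Fin T.card → Bool → S := fun i b' => repPick (e.symm i : S × S) b' with hc_def
      have hcnc : ∀ i, ¬ δ (c i false) (c i true) := by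
        intro i
        have := hT (e.symm i : S × S) (e.symm i).2
        simpa [hc_def, repPick] using this
      have hD2' := hD2 T.card hpos b a c hcnc
      have hnall : ¬ (∀ f : Fin T.card → Bool,
          a ≤ Finset.univ.sup (fun i => c i (f i)) ∨
          b ≤ Finset.univ.sup (fun i => c i (f i))) :=
        fun h => hD2' h hab
      push_neg at hnall
      obtain ⟨f, hfa, hfb⟩ := hnall
      refine ⟨fun p => if hp : p ∈ T then f (e ⟨p, hp⟩) else false, ?_, ?_⟩ <;>
      · intro hle
        have hsup : T.sup (fun p => repPick p (if hp : p ∈ T then f (e ⟨p, hp⟩) else false))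
            ≤ Finset.univ.sup (fun i => c i (f i)) := by
          refine Finset.sup_le fun p hp => ?_
          have h1 : repPick p (if hp' : p ∈ T then f (e ⟨p, hp'⟩) else false)
              = c (e ⟨p, hp⟩) (f (e ⟨p, hp⟩)) := by
            rw [dif_pos hp]; simp [hc_def]
          rw [h1]
          exact Finset.le_sup (f := fun i => c i (f i)) (Finset.mem_univ (e ⟨p, hp⟩))
        first
          | exact hfa (le_trans hle (by simpa [hk'] using hsup))
          | exact hfb (le_trans hle (by simpa [hk'] using hsup))
  have hzorn : ∃ m, {x : S | x ≤ ⊥} ⊆ m ∧ Maximal (· ∈ 𝒮) m := by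
    refine zorn_subset_nonempty 𝒮 ?_ _ hK0
    intro c hc hchain hcne
    refine ⟨⋃₀ c, ⟨⟨?_, ?_, ?_⟩, ?_⟩, fun s hs => Set.subset_sUnion_of_mem hs⟩
    · obtain ⟨I, hI⟩ := hcne; exact ⟨I, hI, (hc hI).1.1⟩
    · rintro x y hxy ⟨I, hI, hyI⟩; exact ⟨I, hI, (hc hI).1.2.1 x y hxy hyI⟩
    · rintro x y ⟨I, hI, hxI⟩ ⟨J, hJ, hyJ⟩
      rcases hchain.total hI hJ with h | h
      · exact ⟨J, hJ, (hc hJ).1.2.2 x y (h hxI) hyJ⟩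
      · exact ⟨I, hI, (hc hI).1.2.2 x y hxI (h hyJ)⟩
    · rintro T hT k ⟨I, hI, hkI⟩
      exact (hc hI).2 T hT k hkI
  obtain ⟨K, -, ⟨⟨hKidl, hKcons⟩, hmax⟩⟩ := hzorn
  have haK : a ∉ K := fun haK => by
    obtain ⟨σ, h1, -⟩ := hKcons ∅ (by simp) a haK
    exact h1 le_sup_left
  have hbK : b ∉ K := fun hbK => by
    obtain ⟨σ, -, h2⟩ := hKcons ∅ (by simp) b hbK
    exact h2 le_sup_left
  refine ⟨K, hKidl, ?_, haK, hbK⟩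
  intro u v hu hv
  by_contra huv
  have key : ∀ w : S, w ∉ K → ∃ T : Finset (S × S), (∀ p ∈ T, ¬ δ p.1 p.2) ∧
      ∃ k ∈ K, ∀ σ : S × S → Bool,
        a ≤ (k ⊔ w) ⊔ T.sup (fun p => repPick p (σ p)) ∨
        b ≤ (k ⊔ w) ⊔ T.sup (fun p => repPick p (σ p)) := by
    intro w hw
    have hnc : ¬ RepCons δ a b {x : S | ∃ k ∈ K, x ≤ k ⊔ w} := by
      intro hcons
      have hmem : {x : S | ∃ k ∈ K, x ≤ k ⊔ w} ∈ 𝒮 := ⟨rep_idl_gen hKidl w, hcons⟩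
      have hsub : K ⊆ {x : S | ∃ k ∈ K, x ≤ k ⊔ w} := fun x hx => ⟨x, hx, le_sup_left⟩
      exact hw (hmax hmem hsub ⟨⊥, hKidl.1, le_sup_right⟩)
    unfold RepCons at hnc
    push_neg at hnc
    obtain ⟨T, hT, x, ⟨k, hk, hxk⟩, hall⟩ := hnc
    refine ⟨T, hT, k, hk, fun σ => ?_⟩
    have hmono : x ⊔ T.sup (fun p => repPick p (σ p)) ≤
        (k ⊔ w) ⊔ T.sup (fun p => repPick p (σ p)) := sup_le_sup hxk le_rfl
    by_cases hca : a ≤ x ⊔ T.sup (fun p => repPick p (σ p))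
    · exact Or.inl (hca.trans hmono)
    · exact Or.inr ((hall σ hca).trans hmono)
  obtain ⟨T₁, hT₁, k₁, hk₁, hall₁⟩ := key u hu
  obtain ⟨T₂, hT₂, k₂, hk₂, hall₂⟩ := key v hv
  set T : Finset (S × S) := insert (u, v) (T₁ ∪ T₂) with hTdef
  have hTnc : ∀ p ∈ T, ¬ δ p.1 p.2 := by
    intro p hp
    rcases Finset.mem_insert.mp hp with h | h
    · subst h; exact huv
    · rcases Finset.mem_union.mp h with h | h
      exacts [hT₁ p h, hT₂ p h]
  obtain ⟨σ, hna, hnb⟩ := hKcons T hTnc (k₁ ⊔ k₂) (hKidl.2.2 _ _ hk₁ hk₂)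
  have hmemT : (u, v) ∈ T := Finset.mem_insert_self _ _
  cases hσ : σ (u, v) with
  | false =>
    have hub : u ≤ T.sup (fun p => repPick p (σ p)) := by
      have := Finset.le_sup (f := fun p => repPick p (σ p)) hmemT
      simpa [repPick, hσ] using this
    have hsub : T₁.sup (fun p => repPick p (σ p)) ≤ T.sup (fun p => repPick p (σ p)) :=
      Finset.sup_mono (fun p hp => Finset.mem_insert_of_mem (Finset.mem_union_left _ hp))
    have hle : (k₁ ⊔ u) ⊔ T₁.sup (fun p => repPick p (σ p)) ≤
        (k₁ ⊔ k₂) ⊔ T.sup (fun p => repPick p (σ p)) :=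
      sup_le (sup_le (le_sup_of_le_left le_sup_left) (le_sup_of_le_right hub))
        (le_sup_of_le_right hsub)
    rcases hall₁ σ with h | h
    · exact hna (h.trans hle)
    · exact hnb (h.trans hle)
  | true =>
    have hvb : v ≤ T.sup (fun p => repPick p (σ p)) := by
      have := Finset.le_sup (f := fun p => repPick p (σ p)) hmemT
      simpa [repPick, hσ] using this
    have hsub : T₂.sup (fun p => repPick p (σ p)) ≤ T.sup (fun p => repPick p (σ p)) :=
      Finset.sup_mono (fun p hp => Finset.mem_insert_of_mem (Finset.mem_union_right _ hp))
    have hle : (k₂ ⊔ v) ⊔ T₂.sup (fun p => repPick p (σ p)) ≤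
        (k₁ ⊔ k₂) ⊔ T.sup (fun p => repPick p (σ p)) :=
      sup_le (sup_le (le_sup_of_le_left le_sup_right) (le_sup_of_le_right hvb))
        (le_sup_of_le_right hsub)
    rcases hall₂ σ with h | h
    · exact hna (h.trans hle)
    · exact hnb (h.trans hle)

end RepAux

lemma rep_sup_subset {S X : Type} [SemilatticeSup S] [OrderBot S] (h : S → Set X)
    (hbot : h ⊥ = ∅) (hun : ∀ a b : S, h (a ⊔ b) = h a ∪ h b)
    {ι : Type} (s : Finset ι) (g : ι → S) :
    h (s.sup g) ⊆ ⋃ i ∈ s, h (g i) := by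
  classical
  induction s using Finset.induction_on with
  | empty => simp [hbot]
  | insert a s' hx ih =>
    rw [Finset.sup_insert, hun]
    rintro x (hx' | hx')
    · exact Set.mem_biUnion (Finset.mem_insert_self _ _) hx'
    · obtain ⟨i, hi, hxi⟩ := Set.mem_iUnion₂.mp (ih hx')
      exact Set.mem_biUnion (Finset.mem_insert_of_mem hi) hxi

theorem stmt15 {S : Type} [SemilatticeSup S] [OrderBot S] (δ : S → S → Prop)
    (hwc : IsWeakContact δ) :
    (CondD1 δ ∧ ∀ n : ℕ, 0 < n → CondD2 n δ) ↔
      ∃ (X : Type) (h : S → Set X),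
        Function.Injective h ∧
        h ⊥ = ∅ ∧
        (∀ a b : S, h (a ⊔ b) = h a ∪ h b) ∧
        (∀ a b : S, δ a b ↔ (h a ∩ h b).Nonempty) := by
  classical
  constructor
  · rintro ⟨hD1, hD2⟩
    refine ⟨{I : Set S // RepIsIdl I ∧ ∀ u v : S, u ∉ I → v ∉ I → δ u v},
      fun a => {I | a ∉ I.val}, ?_, ?_, ?_, ?_⟩
    · have key : ∀ a b : S,
          ({I : {I : Set S // RepIsIdl I ∧ ∀ u v : S, u ∉ I → v ∉ I → δ u v} | a ∉ I.val}
            = {I | b ∉ I.val}) → a ≤ b := by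
        intro a b hEq
        by_contra hab
        obtain ⟨I, hIidl, hIcl, hbI, haI⟩ := rep_lemA δ hD1 hab
        have hmem : (⟨I, hIidl, hIcl⟩ : {I : Set S // RepIsIdl I ∧
            ∀ u v : S, u ∉ I → v ∉ I → δ u v}) ∈ {I | a ∉ I.val} := haI
        rw [hEq] at hmem
        exact hmem hbI
      exact fun a b hEq => le_antisymm (key a b hEq) (key b a hEq.symm)
    · exact Set.eq_empty_iff_forall_notMem.mpr fun I hI => hI I.2.1.1
    · intro a b
      ext I
      simp only [Set.mem_setOf_eq, Set.mem_union]
      constructor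
      · intro hmem
        by_contra hcon
        push_neg at hcon
        obtain ⟨ha, hb⟩ := hcon
        exact hmem (I.2.1.2.2 a b ha hb)
      · rintro (ha | hb) hmem
        · exact ha (I.2.1.2.1 a (a ⊔ b) le_sup_left hmem)
        · exact hb (I.2.1.2.1 b (a ⊔ b) le_sup_right hmem)
    · intro a b
      constructor
      · intro hab
        obtain ⟨K, hKidl, hKcl, haK, hbK⟩ := rep_lemB δ hwc hD2 hab
        exact ⟨⟨K, hKidl, hKcl⟩, haK, hbK⟩
      · rintro ⟨⟨I, hIidl, hIcl⟩, haI, hbI⟩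
        exact hIcl a b haI hbI
  · rintro ⟨X, h, hinj, hbot, hun, hδ⟩
    have hmono : ∀ a b : S, a ≤ b ↔ h a ⊆ h b := by
      intro a b
      constructor
      · intro hab x hx
        have heq : a ⊔ b = b := sup_eq_right.mpr hab
        rw [← heq, hun]
        exact Or.inl hx
      · intro hsub
        have heq : h (a ⊔ b) = h b := by
          rw [hun]; exact Set.union_eq_self_of_subset_left hsub
        exact sup_eq_right.mp (hinj heq)
    constructor
    · intro a b c₀ c₁ hnc hb0 hb1
      rw [hmono]
      intro x hx
      have h0 : x ∈ h a ∪ h c₀ := by rw [← hun]; exact (hmono b _).mp hb0 hx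
      have h1 : x ∈ h a ∪ h c₁ := by rw [← hun]; exact (hmono b _).mp hb1 hx
      rcases h0 with h0 | h0
      · exact h0
      rcases h1 with h1 | h1
      · exact h1
      exact absurd ((hδ c₀ c₁).mpr ⟨x, h0, h1⟩) hnc
    · intro n hn a b c hnc hcov hba
      obtain ⟨x, hxb, hxa⟩ := (hδ b a).mp hba
      set f : Fin n → Bool := fun i => if x ∈ h (c i false) then true else false with hf
      have hxf : ∀ i, x ∉ h (c i (f i)) := by
        intro i
        by_cases hxi : x ∈ h (c i false)
        · simp only [hf, if_pos hxi]
          intro hxt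
          exact hnc i ((hδ _ _).mpr ⟨x, hxi, hxt⟩)
        · simp only [hf, if_neg hxi]
          exact hxi
      have hcontra : ∀ y : S, x ∈ h y →
          ¬ y ≤ Finset.univ.sup (fun i => c i (f i)) := by
        intro y hxy hle
        have hx' := (hmono y _).mp hle hxy
        obtain ⟨i, -, hxi⟩ := Set.mem_iUnion₂.mp
          (rep_sup_subset h hbot hun Finset.univ (fun i => c i (f i)) hx')
        exact hxf i hxi
      rcases hcov f with hle | hle
      · exact hcontra b hxb hle
      · exact hcontra a hxa hle
end

section
/- Let C and D be Boolean algebras, let δ_C be the overlap contact on C (a δ_C b if and only if a ⊓ b ≠ 0), and let δ_D be a weak contact relation on D. Let χ : C → D be a map with χ(0) = 0, χ(1) = 1, χ(a ⊔ b) = χ(a) ⊔ χ(b) for all a, b ∈ C, and a δ_C b if and only if χ(a) δ_D χ(b), for all a, b ∈ C. Then χ is a Boolean algebra homomorphism: χ(aᶜ) = χ(a)ᶜ and χ(a ⊓ b) = χ(a) ⊓ χ(b) for all a, b ∈ C. -/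
theorem stmt16 {C D : Type*} [BooleanAlgebra C] [BooleanAlgebra D]
    (δD : D → D → Prop) (hwc : IsWeakContact δD)
    (χ : C → D) (h0 : χ ⊥ = ⊥) (h1 : χ ⊤ = ⊤)
    (hsup : ∀ a b : C, χ (a ⊔ b) = χ a ⊔ χ b)
    (hδ : ∀ a b : C, a ⊓ b ≠ ⊥ ↔ δD (χ a) (χ b)) :
    (∀ a : C, χ aᶜ = (χ a)ᶜ) ∧ (∀ a b : C, χ (a ⊓ b) = χ a ⊓ χ b) := by
  obtain ⟨hne, hrefl, _hsymm, hext⟩ := hwc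
  have hcompl : ∀ a : C, χ aᶜ = (χ a)ᶜ := by
    intro a
    have hsup' : χ a ⊔ χ aᶜ = ⊤ := by rw [← hsup, sup_compl_eq_top, h1]
    have hinf' : χ a ⊓ χ aᶜ = ⊥ := by
      by_contra h
      have : δD (χ a) (χ aᶜ) :=
        hext _ _ _ _ (hrefl _ h) inf_le_left inf_le_right
      exact absurd ((hδ a aᶜ).mpr this) (by simp)
    exact eq_compl_iff_isCompl.mpr
      ⟨disjoint_iff.mpr (by rw [inf_comm, hinf']), codisjoint_iff.mpr (by rw [sup_comm, hsup'])⟩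
  refine ⟨hcompl, fun a b => ?_⟩
  have : a ⊓ b = (aᶜ ⊔ bᶜ)ᶜ := by simp
  rw [this, hcompl, hsup, hcompl, hcompl, compl_sup, compl_compl, compl_compl]
end
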